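/- arXiv:2605.04612 — 19 statements merged into one kernel-verified Lean document; each statement's English description precedes it below -/
import Mathlib

section
/- In any party-list instance of approval-based committee voting, a committee satisfies PJR if and only if it satisfies lower quota (i.e., each party with nₓ supporters receives at least min(⌊k·nₓ/n⌋, |Cₓ|) seats). -/
open Finset


/-- A committee `W` satisfies proportional justified representation (PJR) in the
instance with voters `N`, approval profile `A`, and committee size `k`:
for every `ℓ ∈ [k]` and every `ℓ`-large (`|N'| ≥ ℓ·n/k`) and `ℓ`-cohesive
(`|⋂_{i∈N'} A_i| ≥ ℓ`) group `N' ⊆ N`, we have `|⋃_{i∈N'}(A_i ∩ W)| ≥ ℓ`. -/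
def PJR (N : Finset ℕ) (A : ℕ → Finset ℕ) (k : ℕ) (W : Finset ℕ) : Prop :=
  ∀ ℓ : ℕ, 1 ≤ ℓ → ℓ ≤ k → ∀ N' ⊆ N, ℓ * N.card ≤ N'.card * k →
    (∃ T : Finset ℕ, ℓ ≤ T.card ∧ ∀ i ∈ N', T ⊆ A i) →
    ℓ ≤ (N'.biUnion fun i => A i ∩ W).card

/-- `(N, A, C, k)` is a party-list instance with set of parties `P`:
the parties are nonempty, pairwise disjoint, cover `C`, and every voter's
ballot is exactly one party. -/
def IsPartyList (N C : Finset ℕ) (A : ℕ → Finset ℕ) (P : Finset (Finset ℕ)) : Prop :=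
  (∀ p ∈ P, p.Nonempty) ∧
  (∀ p ∈ P, ∀ q ∈ P, p ≠ q → Disjoint p q) ∧
  P.biUnion id = C ∧
  ∀ i ∈ N, A i ∈ P

/-- Lower quota on a party-list instance with parties `P`: each party `p` with
`n_p` supporters receives at least `min(⌊k·n_p/n⌋, |p|)` seats. -/
def LowerQuota (N : Finset ℕ) (A : ℕ → Finset ℕ) (k : ℕ) (P : Finset (Finset ℕ))
    (W : Finset ℕ) : Prop :=
  ∀ p ∈ P, min (k * (N.filter fun i => A i = p).card / N.card) p.card ≤ (W ∩ p).card

/-- On any party-list instance, a committee satisfies PJR iff it satisfies lower quota. -/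
theorem pjr_iff_lowerQuota_on_partyList
    (N C : Finset ℕ) (A : ℕ → Finset ℕ) (k : ℕ) (P : Finset (Finset ℕ)) (W : Finset ℕ)
    (hN : N.Nonempty) (hPL : IsPartyList N C A P) (hW : W ⊆ C) (hWk : W.card = k) :
    PJR N A k W ↔ LowerQuota N A k P W := by
  obtain ⟨hPne, hPdisj, hPcov, hPA⟩ := hPL
  have hn : 0 < N.card := hN.card_pos
  constructor
  · intro hPJR p hp
    set np := (N.filter fun i => A i = p).card with hnp
    set ℓ := min (k * np / N.card) p.card with hℓ
    rcases Nat.eq_zero_or_pos ℓ with h0 | hℓ1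
    · omega
    have hℓk : ℓ ≤ k := by
      have h1 : k * np / N.card ≤ k * N.card / N.card :=
        Nat.div_le_div_right (Nat.mul_le_mul_left k (card_filter_le _ _))
      have h2 : k * N.card / N.card = k := Nat.mul_div_cancel k hn
      have := min_le_left (k * np / N.card) p.card
      omega
    have hlarge : ℓ * N.card ≤ np * k := by
      have h1 : ℓ ≤ k * np / N.card := min_le_left _ _
      have := (Nat.le_div_iff_mul_le hn).mp h1
      nlinarith
    have key := hPJR ℓ hℓ1 hℓk (N.filter fun i => A i = p) (filter_subset _ _)
      hlarge ⟨p, min_le_right _ _, fun i hi => by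
        rw [(mem_filter.mp hi).2]⟩
    calc ℓ ≤ _ := key
      _ ≤ (W ∩ p).card := by
        apply card_le_card
        intro x hx
        obtain ⟨i, hi, hxi⟩ := mem_biUnion.mp hx
        rw [mem_inter] at hxi ⊢
        exact ⟨hxi.2, (mem_filter.mp hi).2 ▸ hxi.1⟩
  · rintro hLQ ℓ hℓ1 hℓk N' hN'N hlarge ⟨T, hT, hTA⟩
    have hN'ne : N'.Nonempty := by
      rw [← card_pos]
      rcases Nat.eq_zero_or_pos N'.card with h | h
      · exfalso
        have h2 : ℓ * N.card = 0 := Nat.le_zero.mp (by simpa [h] using hlarge)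
        rcases Nat.mul_eq_zero.mp h2 with h3 | h3 <;> omega
      · exact h
    obtain ⟨i0, hi0⟩ := hN'ne
    obtain ⟨t, ht⟩ : T.Nonempty := card_pos.mp (by omega)
    set p := A i0 with hpdef
    have hp : p ∈ P := hPA i0 (hN'N hi0)
    have hall : ∀ i ∈ N', A i = p := by
      intro i hi
      by_contra hne
      have hdis := hPdisj (A i) (hPA i (hN'N hi)) p hp hne
      exact (disjoint_left.mp hdis (hTA i hi ht)) (hTA i0 hi0 ht)
    have hsub : N' ⊆ N.filter fun i => A i = p := by
      intro i hi
      exact mem_filter.mpr ⟨hN'N hi, hall i hi⟩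
    have hnp : N'.card ≤ (N.filter fun i => A i = p).card := card_le_card hsub
    have h1 : ℓ ≤ k * (N.filter fun i => A i = p).card / N.card := by
      rw [Nat.le_div_iff_mul_le hn]
      nlinarith
    have h2 : ℓ ≤ p.card := le_trans hT (card_le_card (hTA i0 hi0))
    have h3 := hLQ p hp
    have h4 : W ∩ p ⊆ N'.biUnion fun i => A i ∩ W := by
      intro x hx
      rw [mem_inter] at hx
      exact mem_biUnion.mpr ⟨i0, hi0, mem_inter.mpr ⟨hx.2, hx.1⟩⟩
    have := card_le_card h4
    omega
end

section
/- In any party-list instance, a committee satisfies EJR+ if and only if it satisfies lower quota. -/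
open Finset


/-- EJR+: for every `ℓ ∈ [k]`, every candidate `c ∉ W`, and every `ℓ`-large group
`N'` of supporters of `c`, some `i ∈ N'` has `|A_i ∩ W| ≥ ℓ`. -/
def EJRplus (N : Finset ℕ) (A : ℕ → Finset ℕ) (k : ℕ) (W : Finset ℕ) : Prop :=
  ∀ ℓ : ℕ, 1 ≤ ℓ → ℓ ≤ k → ∀ c : ℕ, c ∉ W →
    ∀ N' ⊆ N, (∀ i ∈ N', c ∈ A i) → ℓ * N.card ≤ N'.card * k →
    ∃ i ∈ N', ℓ ≤ (A i ∩ W).card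

/-- On any party-list instance, a committee satisfies EJR+ iff it satisfies lower quota. -/
theorem ejrplus_iff_lowerQuota_on_partyList
    (N C : Finset ℕ) (A : ℕ → Finset ℕ) (k : ℕ) (P : Finset (Finset ℕ)) (W : Finset ℕ)
    (hN : N.Nonempty) (hPL : IsPartyList N C A P) (hW : W ⊆ C) (hWk : W.card = k) :
    EJRplus N A k W ↔ LowerQuota N A k P W := by
  obtain ⟨hPne, hPdisj, hPcov, hA⟩ := hPL
  have hNcard : 0 < N.card := hN.card_pos
  constructor
  · intro hE p hp
    by_contra hlt
    push_neg at hlt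
    set np := (N.filter fun i => A i = p).card with hnp
    set ℓ := (W ∩ p).card + 1 with hℓ
    have hℓdiv : ℓ ≤ k * np / N.card := by omega
    have hℓp : ℓ ≤ p.card := by omega
    have hnpN : np ≤ N.card := card_filter_le _ _
    have hℓk : ℓ ≤ k := by
      calc ℓ ≤ k * np / N.card := hℓdiv
        _ ≤ k * N.card / N.card := Nat.div_le_div_right (Nat.mul_le_mul_left _ hnpN)
        _ = k := Nat.mul_div_cancel k hNcard
    -- find c ∈ p \ W
    have hex : ∃ c ∈ p, c ∉ W := by
      by_contra hc
      push_neg at hc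
      have h2 : W ∩ p = p := inter_eq_right.mpr hc
      rw [h2] at hlt
      omega
    obtain ⟨c, hcp, hcW⟩ := hex
    have hmul : ℓ * N.card ≤ np * k := by
      have := (Nat.le_div_iff_mul_le hNcard).mp hℓdiv
      nlinarith
    obtain ⟨i, hi, hile⟩ := hE ℓ (by omega) hℓk c hcW (N.filter fun i => A i = p)
      (filter_subset _ _)
      (fun i hi => by
        have := (mem_filter.mp hi).2
        rw [this]; exact hcp)
      hmul
    have hAi : A i = p := (mem_filter.mp hi).2
    rw [hAi, inter_comm] at hile
    omega
  · intro hL ℓ hℓ1 hℓk c hcW N' hN'N hN'c hcard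
    have hk : 0 < k := lt_of_lt_of_le hℓ1 hℓk
    have hN'ne : N'.Nonempty := by
      rw [← card_pos]
      nlinarith [hcard, hℓ1, hNcard, hℓk]
    obtain ⟨i0, hi0⟩ := hN'ne
    have hpP : A i0 ∈ P := hA i0 (hN'N hi0)
    have hcp : c ∈ A i0 := hN'c i0 hi0
    have hsame : ∀ i ∈ N', A i = A i0 := by
      intro i hi
      by_contra hne
      exact (disjoint_left.mp (hPdisj _ (hA i (hN'N hi)) _ hpP hne) (hN'c i hi)) hcp
    have hsub : N' ⊆ N.filter fun i => A i = A i0 := by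
      intro i hi
      exact mem_filter.mpr ⟨hN'N hi, hsame i hi⟩
    have hnp : N'.card ≤ (N.filter fun i => A i = A i0).card := card_le_card hsub
    have hℓdiv : ℓ ≤ k * (N.filter fun i => A i = A i0).card / N.card := by
      rw [Nat.le_div_iff_mul_le hNcard]
      nlinarith
    have hq := hL (A i0) hpP
    have hWpc : (W ∩ A i0).card < (A i0).card := by
      have hsub2 : W ∩ A i0 ⊆ (A i0).erase c := by
        intro x hx
        rcases mem_inter.mp hx with ⟨hxW, hxp⟩
        exact mem_erase.mpr ⟨fun h => hcW (h ▸ hxW), hxp⟩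
      have := card_le_card hsub2
      rw [card_erase_of_mem hcp] at this
      have hpos : 0 < (A i0).card := card_pos.mpr ⟨c, hcp⟩
      omega
    refine ⟨i0, hi0, ?_⟩
    rw [inter_comm]
    omega
end

section
/- In any party-list instance, a committee satisfies core stability if and only if it satisfies lower quota. (In particular, forward direction: if W is core-stable then W satisfies lower quota; backward: lower quota implies core stability, proved via the mediant inequality by partitioning any deviating coalition by party.) -/
open Finset


/-- Core stability: no nonempty group `N'` together with a set `T ⊆ C` of candidates
with `|N'| ≥ |T|·n/k` exists such that every voter in `N'` strictly prefers `T` to `W`. -/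
def CoreStable (N C : Finset ℕ) (A : ℕ → Finset ℕ) (k : ℕ) (W : Finset ℕ) : Prop :=
  ¬ ∃ N' T : Finset ℕ, N' ⊆ N ∧ T ⊆ C ∧ N'.Nonempty ∧
      T.card * N.card ≤ N'.card * k ∧ ∀ i ∈ N', (A i ∩ W).card < (A i ∩ T).card

/-- Splitting the cardinality of a subset of a disjoint union by parts. -/
lemma card_eq_sum_inter_of_subset_biUnion (P : Finset (Finset ℕ)) (T : Finset ℕ)
    (hdisj : ∀ p ∈ P, ∀ q ∈ P, p ≠ q → Disjoint p q)
    (hT : T ⊆ P.biUnion id) :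
    T.card = ∑ p ∈ P, (T ∩ p).card := by
  have hTeq : T = P.biUnion (fun p => T ∩ p) := by
    ext x
    simp only [mem_biUnion, mem_inter]
    constructor
    · intro hx
      obtain ⟨p, hp, hxp⟩ := mem_biUnion.mp (hT hx)
      exact ⟨p, hp, hx, hxp⟩
    · rintro ⟨p, hp, hx, _⟩
      exact hx
  rw [hTeq, card_biUnion]
  · simp [← hTeq]
  · intro p hp q hq hpq
    exact (hdisj p hp q hq hpq).mono inter_subset_right inter_subset_right

/-- On any party-list instance, a committee is core stable iff it satisfies lower quota. -/
theorem core_iff_lowerQuota_on_partyList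
    (N C : Finset ℕ) (A : ℕ → Finset ℕ) (k : ℕ) (P : Finset (Finset ℕ)) (W : Finset ℕ)
    (hN : N.Nonempty) (hPL : IsPartyList N C A P) (hW : W ⊆ C) (hWk : W.card = k) :
    CoreStable N C A k W ↔ LowerQuota N A k P W := by
  obtain ⟨hPne, hPdisj, hPC, hA⟩ := hPL
  have hn : 0 < N.card := hN.card_pos
  constructor
  · -- core stable → lower quota
    intro hCore p hp
    by_contra h
    push_neg at h
    set np := (N.filter fun i => A i = p).card with hnp
    set m := (W ∩ p).card + 1 with hm
    have hm1 : m ≤ k * np / N.card := by omega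
    have hm2 : m ≤ p.card := by omega
    obtain ⟨T, hTp, hTcard⟩ := Finset.exists_subset_card_eq hm2
    have hmn : m * N.card ≤ k * np := (Nat.le_div_iff_mul_le hn).mp hm1
    have hnp0 : 0 < np := by
      rcases Nat.eq_zero_or_pos np with h0 | h0
      · exfalso
        rw [h0, Nat.mul_zero, Nat.le_zero] at hmn
        have hm0 : 0 < m * N.card := Nat.mul_pos (by omega) hn
        omega
      · exact h0
    have hN'ne : (N.filter fun i => A i = p).Nonempty := card_pos.mp hnp0
    apply hCore
    refine ⟨N.filter fun i => A i = p, T, filter_subset _ _, ?_, hN'ne, ?_, ?_⟩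
    · exact hTp.trans (hPC ▸ subset_biUnion_of_mem id hp)
    · rw [hTcard, ← hnp]
      calc m * N.card ≤ k * np := hmn
        _ = np * k := Nat.mul_comm _ _
    · intro i hi
      have hAi : A i = p := (mem_filter.mp hi).2
      rw [hAi]
      have h1 : p ∩ T = T := inter_eq_right.mpr hTp
      have h2 : (p ∩ W).card = (W ∩ p).card := by rw [inter_comm]
      rw [h1, hTcard, h2]
      omega
  · -- lower quota → core stable
    intro hLQ
    rintro ⟨N', T, hN'N, hTC, hN'ne, hsize, hpref⟩
    have hfib : ∀ i ∈ N', A i ∈ P := fun i hi => hA i (hN'N hi)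
    have hcardN' : N'.card = ∑ p ∈ P, (N'.filter fun i => A i = p).card :=
      card_eq_sum_card_fiberwise hfib
    have hcardT : T.card = ∑ p ∈ P, (T ∩ p).card :=
      card_eq_sum_inter_of_subset_biUnion P T hPdisj (hPC ▸ hTC)
    -- per-party bounds
    have key : ∀ p ∈ P, (N'.filter fun i => A i = p).Nonempty →
        (N'.filter fun i => A i = p).card * k < (T ∩ p).card * N.card := by
      intro p hp ⟨i, hi⟩
      have hAi : A i = p := (mem_filter.mp hi).2
      have hiN' : i ∈ N' := (mem_filter.mp hi).1
      have hpref' := hpref i hiN'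
      rw [hAi] at hpref'
      have hWp : (p ∩ W).card = (W ∩ p).card := by rw [inter_comm]
      have hTpsub : T ∩ p ⊆ p := inter_subset_right
      have hTpcard : (p ∩ T).card = (T ∩ p).card := by rw [inter_comm]
      have hTple : (T ∩ p).card ≤ p.card := card_le_card hTpsub
      have hLQp := hLQ p hp
      set np := (N.filter fun i => A i = p).card with hnp
      have hdivlt : k * np / N.card < (T ∩ p).card := by
        rcases le_or_gt (k * np / N.card) p.card with hc | hc
        · omega
        · omega
      have hlt : k * np < (T ∩ p).card * N.card :=
        (Nat.div_lt_iff_lt_mul hn).mp hdivlt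
      have hsub : (N'.filter fun i => A i = p).card ≤ np := by
        apply card_le_card
        exact filter_subset_filter _ hN'N
      calc (N'.filter fun i => A i = p).card * k ≤ np * k :=
            Nat.mul_le_mul_right _ hsub
        _ = k * np := Nat.mul_comm _ _
        _ < (T ∩ p).card * N.card := hlt
    have hle : ∀ p ∈ P, (N'.filter fun i => A i = p).card * k ≤ (T ∩ p).card * N.card := by
      intro p hp
      rcases (N'.filter fun i => A i = p).eq_empty_or_nonempty with he | hne
      · rw [he]; simp
      · exact (key p hp hne).le
    obtain ⟨i0, hi0⟩ := hN'ne
    have hp0 : A i0 ∈ P := hfib i0 hi0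
    have hne0 : (N'.filter fun i => A i = A i0).Nonempty :=
      ⟨i0, mem_filter.mpr ⟨hi0, rfl⟩⟩
    have hstrict : ∑ p ∈ P, (N'.filter fun i => A i = p).card * k <
        ∑ p ∈ P, (T ∩ p).card * N.card :=
      Finset.sum_lt_sum hle ⟨A i0, hp0, key (A i0) hp0 hne0⟩
    rw [← Finset.sum_mul, ← Finset.sum_mul, ← hcardN', ← hcardT] at hstrict
    omega
end

section
/- PJR+ satisfies monotonicity: if committee W satisfies PJR+ in instance (N, A, C, k) and A' is an approval profile with A_i ⊆ A'_i and A'_i \ A_i ⊆ W for all voters i, then W satisfies PJR+ in (N, A', C, k). -/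
open Finset


/-- PJR+: for every `ℓ ∈ [k]`, every candidate `c ∉ W`, and every `ℓ`-large group
`N'` of supporters of `c`, we have `|⋃_{i∈N'}(A_i ∩ W)| ≥ ℓ`. -/
def PJRplus (N : Finset ℕ) (A : ℕ → Finset ℕ) (k : ℕ) (W : Finset ℕ) : Prop :=
  ∀ ℓ : ℕ, 1 ≤ ℓ → ℓ ≤ k → ∀ c : ℕ, c ∉ W →
    ∀ N' ⊆ N, (∀ i ∈ N', c ∈ A i) → ℓ * N.card ≤ N'.card * k →
    ℓ ≤ (N'.biUnion fun i => A i ∩ W).card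

/-- PJR+ satisfies monotonicity: if `W` satisfies PJR+ and voters only add
approvals of candidates in `W`, then `W` still satisfies PJR+. -/
theorem pjrplus_monotone
    (N : Finset ℕ) (A A' : ℕ → Finset ℕ) (k : ℕ) (W : Finset ℕ)
    (h : PJRplus N A k W)
    (hmon : ∀ i ∈ N, A i ⊆ A' i ∧ A' i \ A i ⊆ W) :
    PJRplus N A' k W := by
  intro ℓ h1 h2 c hc N' hN' hsupp hsize
  have hsupp' : ∀ i ∈ N', c ∈ A i := by
    intro i hi
    by_contra hcA
    exact hc ((hmon i (hN' hi)).2 (mem_sdiff.mpr ⟨hsupp i hi, hcA⟩))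
  calc ℓ ≤ (N'.biUnion fun i => A i ∩ W).card := h ℓ h1 h2 c hc N' hN' hsupp' hsize
    _ ≤ (N'.biUnion fun i => A' i ∩ W).card := by
        apply card_le_card
        intro x hx
        obtain ⟨i, hi, hxi⟩ := mem_biUnion.mp hx
        exact mem_biUnion.mpr ⟨i, hi, inter_subset_inter_right (hmon i (hN' hi)).1 hxi⟩
end

section
/- EJR+ satisfies monotonicity, independence of losers, robustness to fully satisfied voters, and independence of approval swaps: if W satisfies EJR+ in (N, A, C, k), then (a) it satisfies EJR+ after any voter adds approvals only of candidates in W; (b) it satisfies EJR+ in the instance restricted to C \ {c} for any c ∉ W; (c) it satisfies EJR+ after any voter i replaces A_i by any subset of A_i ∩ W; and (d) it satisfies EJR+ after any voter i replaces A_i by A'_i with A'_i \ W = A_i \ W and |A'_i ∩ W| = |A_i ∩ W|. -/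
open Finset


/-- EJR+ satisfies (a) monotonicity, (b) independence of losers,
(c) robustness to fully satisfied voters, and (d) independence of approval swaps. -/
theorem ejrplus_axioms
    (N C : Finset ℕ) (A : ℕ → Finset ℕ) (k : ℕ) (W : Finset ℕ)
    (hA : ∀ i ∈ N, A i ⊆ C) (hW : W ⊆ C) (hWk : W.card = k)
    (h : EJRplus N A k W) :
    (∀ A' : ℕ → Finset ℕ, (∀ i ∈ N, A i ⊆ A' i ∧ A' i \ A i ⊆ W) →
      EJRplus N A' k W) ∧
    (∀ c ∈ C, c ∉ W → EJRplus N (fun i => A i ∩ C.erase c) k W) ∧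
    (∀ A' : ℕ → Finset ℕ, (∀ i ∈ N, A' i = A i ∨ A' i ⊆ A i ∩ W) →
      EJRplus N A' k W) ∧
    (∀ A' : ℕ → Finset ℕ,
      (∀ i ∈ N, A' i \ W = A i \ W ∧ (A' i ∩ W).card = (A i ∩ W).card) →
      EJRplus N A' k W) := by
  refine ⟨?_, ?_, ?_, ?_⟩
  · intro A' hA' ℓ h1 hk c hc N' hN' hsupp hcard
    obtain ⟨i, hiN, hi⟩ := h ℓ h1 hk c hc N' hN' (fun i hi => by
      have hm := hA' i (hN' hi)
      by_contra hca
      exact hc (hm.2 (mem_sdiff.2 ⟨hsupp i hi, hca⟩))) hcard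
    exact ⟨i, hiN, hi.trans (card_le_card (inter_subset_inter (hA' i (hN' hiN)).1 le_rfl))⟩
  · intro c0 hc0C hc0W ℓ h1 hk c hc N' hN' hsupp hcard
    obtain ⟨i, hiN, hi⟩ := h ℓ h1 hk c hc N' hN'
      (fun i hi => (mem_inter.1 (hsupp i hi)).1) hcard
    refine ⟨i, hiN, hi.trans (card_le_card fun x hx => ?_)⟩
    simp only [mem_inter] at hx ⊢
    exact ⟨⟨hx.1, mem_erase.2 ⟨fun hxe => hc0W (hxe ▸ hx.2), hW hx.2⟩⟩, hx.2⟩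
  · intro A' hA' ℓ h1 hk c hc N' hN' hsupp hcard
    have heq : ∀ i ∈ N', A' i = A i := fun i hi => by
      rcases hA' i (hN' hi) with he | hs
      · exact he
      · exact absurd ((mem_inter.1 (hs (hsupp i hi))).2) hc
    obtain ⟨i, hiN, hi⟩ := h ℓ h1 hk c hc N' hN'
      (fun i hi => heq i hi ▸ hsupp i hi) hcard
    exact ⟨i, hiN, by rw [heq i hiN]; exact hi⟩
  · intro A' hA' ℓ h1 hk c hc N' hN' hsupp hcard
    obtain ⟨i, hiN, hi⟩ := h ℓ h1 hk c hc N' hN' (fun i hi => by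
      have : c ∈ A' i \ W := mem_sdiff.2 ⟨hsupp i hi, hc⟩
      rw [(hA' i (hN' hi)).1] at this
      exact (mem_sdiff.1 this).1) hcard
    exact ⟨i, hiN, by rw [(hA' i (hN' hiN)).2]; exact hi⟩
end

section
/- PJR does not satisfy monotonicity: there exist an instance (N, A, C, k), a committee W satisfying PJR, and a profile A' obtained from A by adding to one voter's ballot a single candidate from W, such that W violates PJR in (N, A', C, k). Concretely, with n = 4, k = 6, C = {c₁,…,c₇}, ballots A₁ = {c₁,c₂,c₃}, A₂ = {c₁,c₂}, A₃ = A₄ = {c₄,c₅,c₆,c₇}, the committee W = {c₁,c₃,c₄,c₅,c₆,c₇} satisfies PJR, but after voter 2 additionally approves c₃ it does not. -/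
set_option maxRecDepth 4000
set_option maxHeartbeats 1000000


open Finset


/-- PJR fails monotonicity: in the concrete instance with `n = 4`, `k = 6`,
ballots `A₁ = {1,2,3}`, `A₂ = {1,2}`, `A₃ = A₄ = {4,5,6,7}`, the committee
`W = {1,3,4,5,6,7}` satisfies PJR, but after voter `2` additionally approves
candidate `3 ∈ W` it violates PJR. -/
theorem pjr_not_monotone :
    PJR ({1,2,3,4} : Finset ℕ)
      (fun i => if i = 1 then {1,2,3} else if i = 2 then {1,2} else {4,5,6,7})
      6 ({1,3,4,5,6,7} : Finset ℕ) ∧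
    ¬ PJR ({1,2,3,4} : Finset ℕ)
      (fun i => if i = 1 then {1,2,3} else if i = 2 then {1,2,3} else {4,5,6,7})
      6 ({1,3,4,5,6,7} : Finset ℕ) := by
  constructor
  · intro ℓ h1 h6 N' hN' hsize ⟨T, hT, hTA⟩
    set A : ℕ → Finset ℕ :=
      (fun i => if i = 1 then {1,2,3} else if i = 2 then {1,2} else {4,5,6,7}) with hA
    have hAsub : ∀ i, A i ⊆ ({1,2,3,4,5,6,7} : Finset ℕ) := by
      intro i; simp only [hA]; split_ifs <;> decide
    have hSne : N'.Nonempty := by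
      rcases N'.eq_empty_or_nonempty with rfl | h
      · simp at hsize; omega
      · exact h
    obtain ⟨i0, hi0⟩ := hSne
    have hTsub : T ⊆ ({1,2,3,4,5,6,7} : Finset ℕ) := (hTA i0 hi0).trans (hAsub i0)
    have key : ∀ S ∈ ({1,2,3,4} : Finset ℕ).powerset,
        ∀ T' ∈ ({1,2,3,4,5,6,7} : Finset ℕ).powerset, ∀ m ∈ Finset.Icc 1 6,
        m * 4 ≤ S.card * 6 → m ≤ T'.card → (∀ i ∈ S, T' ⊆ A i) →
        m ≤ (S.biUnion fun i => A i ∩ ({1,3,4,5,6,7} : Finset ℕ)).card := by decide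
    have hcard : ({1,2,3,4} : Finset ℕ).card = 4 := by decide
    rw [hcard] at hsize
    exact key N' (Finset.mem_powerset.2 hN') T (Finset.mem_powerset.2 hTsub) ℓ
      (Finset.mem_Icc.2 ⟨h1, h6⟩) hsize hT hTA
  · intro h
    have := h 3 (by norm_num) (by norm_num) {1,2} (by decide) (by decide)
      ⟨{1,2,3}, by decide, by decide⟩
    revert this
    decide
end

section
/- EJR does not satisfy monotonicity: with n = 4, k = 6, C = {c₁,…,c₇}, ballots A₁ = {c₁,c₂,c₃}, A₂ = {c₁,c₂}, A₃ = A₄ = {c₄,c₅,c₆,c₇}, the committee W = {c₁,c₃,c₄,c₅,c₆,c₇} satisfies EJR, but after voter 2 additionally approves candidate c₃ ∈ W, W violates EJR. -/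
open Finset


/-- Extended justified representation (EJR). -/
def EJR (N : Finset ℕ) (A : ℕ → Finset ℕ) (k : ℕ) (W : Finset ℕ) : Prop :=
  ∀ ℓ : ℕ, 1 ≤ ℓ → ℓ ≤ k → ∀ N' ⊆ N, ℓ * N.card ≤ N'.card * k →
    (∃ T : Finset ℕ, ℓ ≤ T.card ∧ ∀ i ∈ N', T ⊆ A i) →
    ∃ i ∈ N', ℓ ≤ (A i ∩ W).card

/-- EJR fails monotonicity: in the concrete instance with `n = 4`, `k = 6`,
ballots `A₁ = {1,2,3}`, `A₂ = {1,2}`, `A₃ = A₄ = {4,5,6,7}`, the committee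
`W = {1,3,4,5,6,7}` satisfies EJR, but after voter `2` additionally approves
candidate `3 ∈ W` it violates EJR. -/
theorem ejr_not_monotone :
    EJR ({1,2,3,4} : Finset ℕ)
      (fun i => if i = 1 then {1,2,3} else if i = 2 then {1,2} else {4,5,6,7})
      6 ({1,3,4,5,6,7} : Finset ℕ) ∧
    ¬ EJR ({1,2,3,4} : Finset ℕ)
      (fun i => if i = 1 then {1,2,3} else if i = 2 then {1,2,3} else {4,5,6,7})
      6 ({1,3,4,5,6,7} : Finset ℕ) := by
  have e1 : (({1,2,3} : Finset ℕ) ∩ {1,3,4,5,6,7}).card = 2 := by decide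
  have e2 : (({1,2} : Finset ℕ) ∩ {1,3,4,5,6,7}).card = 1 := by decide
  have e3 : (({4,5,6,7} : Finset ℕ) ∩ {1,3,4,5,6,7}).card = 4 := by decide
  have d13 : (({1,2,3} : Finset ℕ) ∩ {4,5,6,7}).card = 0 := by decide
  have d23 : (({1,2} : Finset ℕ) ∩ {4,5,6,7}).card = 0 := by decide
  have c12 : (({1,2,3} : Finset ℕ) ∩ {1,2}).card = 2 := by decide
  constructor
  · intro ℓ h1 h6 N' hsub hcard hT
    have hmem : N' ∈ ({1,2,3,4} : Finset ℕ).powerset := Finset.mem_powerset.mpr hsub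
    obtain ⟨T, hTc, hTs⟩ := hT
    fin_cases hmem
    · -- ∅
      simp [Finset.card_mk] at hcard; omega
    · -- {1}
      have hℓ : ℓ ≤ 1 := by simp [Finset.card_mk] at hcard; omega
      refine ⟨1, by decide, ?_⟩
      show ℓ ≤ (({1,2,3} : Finset ℕ) ∩ {1,3,4,5,6,7}).card
      omega
    · -- {2}
      have hℓ : ℓ ≤ 1 := by simp [Finset.card_mk] at hcard; omega
      refine ⟨2, by decide, ?_⟩
      show ℓ ≤ (({1,2} : Finset ℕ) ∩ {1,3,4,5,6,7}).card
      omega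
    · -- {1,2}
      have hs1 : T ⊆ ({1,2,3} : Finset ℕ) := hTs 1 (by decide)
      have hs2 : T ⊆ ({1,2} : Finset ℕ) := hTs 2 (by decide)
      have hT2 : T.card ≤ 2 := c12 ▸ Finset.card_le_card (Finset.subset_inter hs1 hs2)
      refine ⟨1, by decide, ?_⟩
      show ℓ ≤ (({1,2,3} : Finset ℕ) ∩ {1,3,4,5,6,7}).card
      omega
    · -- {3}
      have hs3 : T ⊆ ({4,5,6,7} : Finset ℕ) := hTs 3 (by decide)
      have hT4 : T.card ≤ 4 := by
        simpa using Finset.card_le_card hs3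
      refine ⟨3, by decide, ?_⟩
      show ℓ ≤ (({4,5,6,7} : Finset ℕ) ∩ {1,3,4,5,6,7}).card
      omega
    · -- {1,3}
      have hs1 : T ⊆ ({1,2,3} : Finset ℕ) := hTs 1 (by decide)
      have hs3 : T ⊆ ({4,5,6,7} : Finset ℕ) := hTs 3 (by decide)
      have : T.card ≤ 0 := d13 ▸ Finset.card_le_card (Finset.subset_inter hs1 hs3)
      omega
    · -- {2,3}
      have hs2 : T ⊆ ({1,2} : Finset ℕ) := hTs 2 (by decide)
      have hs3 : T ⊆ ({4,5,6,7} : Finset ℕ) := hTs 3 (by decide)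
      have : T.card ≤ 0 := d23 ▸ Finset.card_le_card (Finset.subset_inter hs2 hs3)
      omega
    · -- {1,2,3}
      have hs1 : T ⊆ ({1,2,3} : Finset ℕ) := hTs 1 (by decide)
      have hs3 : T ⊆ ({4,5,6,7} : Finset ℕ) := hTs 3 (by decide)
      have : T.card ≤ 0 := d13 ▸ Finset.card_le_card (Finset.subset_inter hs1 hs3)
      omega
    · -- {4}
      have hs4 : T ⊆ ({4,5,6,7} : Finset ℕ) := hTs 4 (by decide)
      have hT4 : T.card ≤ 4 := by
        simpa using Finset.card_le_card hs4
      refine ⟨4, by decide, ?_⟩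
      show ℓ ≤ (({4,5,6,7} : Finset ℕ) ∩ {1,3,4,5,6,7}).card
      omega
    · -- {1,4}
      have hs1 : T ⊆ ({1,2,3} : Finset ℕ) := hTs 1 (by decide)
      have hs4 : T ⊆ ({4,5,6,7} : Finset ℕ) := hTs 4 (by decide)
      have : T.card ≤ 0 := d13 ▸ Finset.card_le_card (Finset.subset_inter hs1 hs4)
      omega
    · -- {2,4}
      have hs2 : T ⊆ ({1,2} : Finset ℕ) := hTs 2 (by decide)
      have hs4 : T ⊆ ({4,5,6,7} : Finset ℕ) := hTs 4 (by decide)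
      have : T.card ≤ 0 := d23 ▸ Finset.card_le_card (Finset.subset_inter hs2 hs4)
      omega
    · -- {1,2,4}
      have hs1 : T ⊆ ({1,2,3} : Finset ℕ) := hTs 1 (by decide)
      have hs4 : T ⊆ ({4,5,6,7} : Finset ℕ) := hTs 4 (by decide)
      have : T.card ≤ 0 := d13 ▸ Finset.card_le_card (Finset.subset_inter hs1 hs4)
      omega
    · -- {3,4}
      have hs3 : T ⊆ ({4,5,6,7} : Finset ℕ) := hTs 3 (by decide)
      have hT4 : T.card ≤ 4 := by
        simpa using Finset.card_le_card hs3
      refine ⟨3, by decide, ?_⟩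
      show ℓ ≤ (({4,5,6,7} : Finset ℕ) ∩ {1,3,4,5,6,7}).card
      omega
    · -- {1,3,4}
      have hs1 : T ⊆ ({1,2,3} : Finset ℕ) := hTs 1 (by decide)
      have hs3 : T ⊆ ({4,5,6,7} : Finset ℕ) := hTs 3 (by decide)
      have : T.card ≤ 0 := d13 ▸ Finset.card_le_card (Finset.subset_inter hs1 hs3)
      omega
    · -- {2,3,4}
      have hs2 : T ⊆ ({1,2} : Finset ℕ) := hTs 2 (by decide)
      have hs3 : T ⊆ ({4,5,6,7} : Finset ℕ) := hTs 3 (by decide)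
      have : T.card ≤ 0 := d23 ▸ Finset.card_le_card (Finset.subset_inter hs2 hs3)
      omega
    · -- {1,2,3,4}
      have hs1 : T ⊆ ({1,2,3} : Finset ℕ) := hTs 1 (by decide)
      have hs3 : T ⊆ ({4,5,6,7} : Finset ℕ) := hTs 3 (by decide)
      have : T.card ≤ 0 := d13 ▸ Finset.card_le_card (Finset.subset_inter hs1 hs3)
      omega
  · intro h
    obtain ⟨i, hi, hc⟩ := h 3 (by norm_num) (by norm_num) {1,2} (by decide) (by decide)
      ⟨{1,2,3}, by decide, by
        intro i hi
        fin_cases hi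
        · exact fun x hx => hx
        · exact fun x hx => hx⟩
    fin_cases hi
    · have : ((({1,2,3} : Finset ℕ)) ∩ {1,3,4,5,6,7}).card = 2 := by decide
      have hc' : (3:ℕ) ≤ (({1,2,3} : Finset ℕ) ∩ {1,3,4,5,6,7}).card := hc
      omega
    · have : ((({1,2,3} : Finset ℕ)) ∩ {1,3,4,5,6,7}).card = 2 := by decide
      have hc' : (3:ℕ) ≤ (({1,2,3} : Finset ℕ) ∩ {1,3,4,5,6,7}).card := hc
      omega
end

section
/- Any proportionality notion f satisfying independence of losers, monotonicity, robustness to fully satisfied voters, and lower quota for party-lists is a refinement of PJR+; that is, for every instance I, every committee in f(I) satisfies PJR+. -/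
open Finset


/-- Iterated independence of losers (plus one robustness step to normalize
ballots to subsets of `C`): we may delete any set `S` of losers at once. -/
lemma iter_IoL
    (f : Finset ℕ → (ℕ → Finset ℕ) → Finset ℕ → ℕ → Finset ℕ → Prop)
    (hIoL : ∀ N A C k W, f N A C k W → ∀ c ∈ C, c ∉ W →
      f N (fun i => A i ∩ C.erase c) (C.erase c) k W)
    (hRob : ∀ N A C k W A', f N A C k W →
      (∀ i ∈ N, A' i = A i ∨ A' i ⊆ A i ∩ W) → f N A' C k W)
    (N : Finset ℕ) (k : ℕ) (W : Finset ℕ) :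
    ∀ (S : Finset ℕ) (A : ℕ → Finset ℕ) (C : Finset ℕ),
      (∀ i ∈ N, A i ⊆ C) → S ⊆ C → Disjoint S W → f N A C k W →
      f N (fun i => A i ∩ (C \ S)) (C \ S) k W := by
  intro S
  induction S using Finset.induction_on with
  | empty =>
    intro A C hA _ _ hf
    simp only [Finset.sdiff_empty]
    exact hRob N A C k W _ hf (fun i hi => Or.inl (Finset.inter_eq_left.mpr (hA i hi)))
  | @insert a S ha ih =>
    intro A C hA hS hD hf
    have haC : a ∈ C := hS (Finset.mem_insert_self a S)
    have haW : a ∉ W := Finset.disjoint_left.mp hD (Finset.mem_insert_self a S)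
    have h1 := hIoL N A C k W hf a haC haW
    have h2 := ih (fun i => A i ∩ C.erase a) (C.erase a)
      (fun i _ => Finset.inter_subset_right)
      (by
        intro x hx
        have hx' : x ∈ insert a S := Finset.mem_insert_of_mem hx
        exact Finset.mem_erase.mpr ⟨fun h => ha (h ▸ hx), hS hx'⟩)
      (Finset.disjoint_left.mpr fun x hx =>
        Finset.disjoint_left.mp hD (Finset.mem_insert_of_mem hx))
      h1
    have hCeq : C.erase a \ S = C \ insert a S := by
      ext x
      simp only [Finset.mem_sdiff, Finset.mem_erase, Finset.mem_insert]
      tauto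
    have hAeq : (fun i => (A i ∩ C.erase a) ∩ (C.erase a \ S)) =
        fun i => A i ∩ (C \ insert a S) := by
      funext i
      ext x
      simp only [Finset.mem_inter, Finset.mem_sdiff, Finset.mem_erase, Finset.mem_insert]
      tauto
    rw [← hAeq, ← hCeq]
    exact h2

/-- Any proportionality notion satisfying independence of losers, monotonicity,
robustness to fully satisfied voters, and lower quota for party-lists is a
refinement of PJR+. -/
theorem refinement_of_pjrplus
    (f : Finset ℕ → (ℕ → Finset ℕ) → Finset ℕ → ℕ → Finset ℕ → Prop)
    (hIoL : ∀ N A C k W, f N A C k W → ∀ c ∈ C, c ∉ W →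
      f N (fun i => A i ∩ C.erase c) (C.erase c) k W)
    (hMon : ∀ N A C k W A', f N A C k W →
      (∀ i ∈ N, A i ⊆ A' i ∧ A' i \ A i ⊆ W) → f N A' C k W)
    (hRob : ∀ N A C k W A', f N A C k W →
      (∀ i ∈ N, A' i = A i ∨ A' i ⊆ A i ∩ W) → f N A' C k W)
    (hLQ : ∀ N A C k P W, IsPartyList N C A P → f N A C k W → LowerQuota N A k P W) :
    ∀ N A C k W, N.Nonempty → (∀ i ∈ N, A i ⊆ C) → W ⊆ C → W.card = k →
      f N A C k W → PJRplus N A k W := by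
  intro N A C k W hN hA hW hkcard hf ℓ hℓ1 hℓk c hc N' hN'N hNc hquota
  by_contra hlt
  push_neg at hlt
  set T : Finset ℕ := N'.biUnion fun i => A i ∩ W with hT
  have hTW : T ⊆ W := by
    intro x hx
    rcases Finset.mem_biUnion.mp hx with ⟨i, _, hxi⟩
    exact (Finset.mem_inter.mp hxi).2
  have hn : 1 ≤ N.card := Finset.card_pos.mpr hN
  have hk1 : 1 ≤ k := le_trans hℓ1 hℓk
  have hN'pos : 0 < N'.card := by
    rcases Nat.eq_zero_or_pos N'.card with h0 | h
    · rw [h0] at hquota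
      have : 1 ≤ ℓ * N.card := Nat.mul_le_mul hℓ1 hn
      omega
    · exact h
  obtain ⟨i0, hi0⟩ := Finset.card_pos.mp hN'pos
  have hcC : c ∈ C := hA i0 (hN'N hi0) (hNc i0 hi0)
  have hcT : c ∉ T := fun h => hc (hTW h)
  -- Step 1: monotonicity, add T to ballots of voters in N'
  set A1 : ℕ → Finset ℕ := fun i => if i ∈ N' then A i ∪ T else A i with hA1
  have hf1 : f N A1 C k W := by
    apply hMon N A C k W A1 hf
    intro i hi
    by_cases hi' : i ∈ N' <;> simp only [hA1, hi', if_pos, if_neg, if_true, if_false]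
    · constructor
      · exact Finset.subset_union_left
      · intro x hx
        rcases Finset.mem_sdiff.mp hx with ⟨hx1, hx2⟩
        rcases Finset.mem_union.mp hx1 with h | h
        · exact absurd h hx2
        · exact hTW h
    · exact ⟨subset_rfl, by simp⟩
  have hA1C : ∀ i ∈ N, A1 i ⊆ C := by
    intro i hi
    by_cases hi' : i ∈ N' <;> simp only [hA1, hi', if_true, if_false]
    · exact Finset.union_subset (hA i hi) (hTW.trans hW)
    · exact hA i hi
  -- Step 2: iterated IoL, delete all candidates outside W ∪ {c}
  have hWcC : W ∪ {c} ⊆ C := Finset.union_subset hW (Finset.singleton_subset_iff.mpr hcC)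
  have hf2 : f N (fun i => A1 i ∩ (C \ (C \ (W ∪ {c})))) (C \ (C \ (W ∪ {c}))) k W := by
    apply iter_IoL f hIoL hRob N k W (C \ (W ∪ {c})) A1 C hA1C Finset.sdiff_subset
    · refine Finset.disjoint_left.mpr fun x hx hxW => ?_
      rcases Finset.mem_sdiff.mp hx with ⟨_, hx2⟩
      exact hx2 (Finset.mem_union_left _ hxW)
    · exact hf1
  have hCC : C \ (C \ (W ∪ {c})) = W ∪ {c} := by
    ext x
    constructor
    · intro hx
      rcases Finset.mem_sdiff.mp hx with ⟨hxC, hx2⟩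
      by_contra hxn
      exact hx2 (Finset.mem_sdiff.mpr ⟨hxC, hxn⟩)
    · intro hx
      exact Finset.mem_sdiff.mpr ⟨hWcC hx, fun h => (Finset.mem_sdiff.mp h).2 hx⟩
  rw [hCC] at hf2
  -- Step 3: robustness, empty out ballots of voters outside N'
  set A3 : ℕ → Finset ℕ := fun i => if i ∈ N' then A1 i ∩ (W ∪ {c}) else ∅ with hA3
  have hf3 : f N A3 (W ∪ {c}) k W := by
    apply hRob N _ (W ∪ {c}) k W A3 hf2
    intro i _
    by_cases hi' : i ∈ N'
    · exact Or.inl (by simp [hA3, hi'])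
    · exact Or.inr (by simp [hA3, hi'])
  -- Key computation: for i ∈ N', the current ballot is insert c T
  have key : ∀ i ∈ N', A1 i ∩ (W ∪ {c}) = insert c T := by
    intro i hi
    ext x
    simp only [hA1, hi, if_true, Finset.mem_inter, Finset.mem_union, Finset.mem_singleton,
      Finset.mem_insert]
    constructor
    · rintro ⟨hx1, hx2⟩
      rcases hx2 with hxW | rfl
      · refine Or.inr ?_
        rcases hx1 with hxA | hxT
        · exact Finset.mem_biUnion.mpr ⟨i, hi, Finset.mem_inter.mpr ⟨hxA, hxW⟩⟩
        · exact hxT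
      · exact Or.inl rfl
    · rintro (rfl | hxT)
      · exact ⟨Or.inl (hNc i hi), Or.inr rfl⟩
      · exact ⟨Or.inr hxT, Or.inl (hTW hxT)⟩
  -- Step 4: monotonicity, give voters outside N' the ballot W \ T
  set A4 : ℕ → Finset ℕ := fun i => if i ∈ N' then insert c T else W \ T with hA4
  have hf4 : f N A4 (W ∪ {c}) k W := by
    apply hMon N A3 (W ∪ {c}) k W A4 hf3
    intro i _
    by_cases hi' : i ∈ N' <;> simp only [hA3, hA4, hi', if_true, if_false]
    · rw [key i hi']
      exact ⟨subset_rfl, by simp⟩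
    · exact ⟨Finset.empty_subset _, by
        intro x hx
        exact (Finset.mem_sdiff.mp (Finset.mem_sdiff.mp hx).1).1⟩
  -- The party-list structure
  have hTlt : T.card < ℓ := hlt
  have hWTcard : (W \ T).card = k - T.card := by
    rw [Finset.card_sdiff_of_subset hTW, hkcard]
  have hWTne : (W \ T).Nonempty := by
    apply Finset.card_pos.mp
    rw [hWTcard]
    omega
  have hcWT : c ∉ W \ T := fun h => hc (Finset.mem_sdiff.mp h).1
  have hPne : insert c T ≠ W \ T := fun h => hcWT (h ▸ Finset.mem_insert_self c T)
  set P : Finset (Finset ℕ) := {insert c T, W \ T} with hP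
  have hdisj : Disjoint (insert c T) (W \ T) := by
    refine Finset.disjoint_left.mpr fun x hx hx' => ?_
    rcases Finset.mem_insert.mp hx with rfl | hxT
    · exact hcWT hx'
    · exact (Finset.mem_sdiff.mp hx').2 hxT
  have hPL : IsPartyList N (W ∪ {c}) A4 P := by
    refine ⟨?_, ?_, ?_, ?_⟩
    · intro p hp
      rcases Finset.mem_insert.mp hp with rfl | hp
      · exact Finset.insert_nonempty c T
      · rw [Finset.mem_singleton.mp hp]
        exact hWTne
    · intro p hp q hq hpq
      rcases Finset.mem_insert.mp hp with rfl | hp <;>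
        rcases Finset.mem_insert.mp hq with rfl | hq
      · exact absurd rfl hpq
      · rw [Finset.mem_singleton.mp hq]
        exact hdisj
      · rw [Finset.mem_singleton.mp hp]
        exact hdisj.symm
      · rw [Finset.mem_singleton.mp hp, Finset.mem_singleton.mp hq] at hpq
        exact absurd rfl hpq
    · ext x
      simp only [hP, Finset.mem_biUnion, Finset.mem_insert, Finset.mem_singleton, id,
        Finset.mem_union, Finset.mem_sdiff]
      constructor
      · rintro ⟨p, (rfl | rfl), hx⟩
        · rcases Finset.mem_insert.mp hx with rfl | hxT
          · exact Or.inr rfl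
          · exact Or.inl (hTW hxT)
        · exact Or.inl (Finset.mem_sdiff.mp hx).1
      · rintro (hxW | hxc)
        · by_cases hxT : x ∈ T
          · exact ⟨insert c T, Or.inl rfl, Finset.mem_insert_of_mem hxT⟩
          · exact ⟨W \ T, Or.inr rfl, Finset.mem_sdiff.mpr ⟨hxW, hxT⟩⟩
        · subst hxc
          exact ⟨insert x T, Or.inl rfl, Finset.mem_insert_self _ _⟩
    · intro i _
      by_cases hi' : i ∈ N' <;> simp [hA4, hP, hi']
  -- Apply lower quota to party insert c T
  have hLQp := hLQ N A4 (W ∪ {c}) k P W hPL hf4 (insert c T) (Finset.mem_insert_self _ _)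
  have hWinter : W ∩ insert c T = T := by
    ext x
    simp only [Finset.mem_inter, Finset.mem_insert]
    constructor
    · rintro ⟨hxW, rfl | hxT⟩
      · exact absurd hxW hc
      · exact hxT
    · intro hxT
      exact ⟨hTW hxT, Or.inr hxT⟩
  have hcardins : (insert c T).card = T.card + 1 := Finset.card_insert_of_notMem hcT
  rw [hWinter, hcardins] at hLQp
  have hsub : N' ⊆ N.filter fun i => A4 i = insert c T := by
    intro i hi
    refine Finset.mem_filter.mpr ⟨hN'N hi, ?_⟩
    simp [hA4, hi]
  have hm : N'.card ≤ (N.filter fun i => A4 i = insert c T).card :=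
    Finset.card_le_card hsub
  have hq : ℓ ≤ k * (N.filter fun i => A4 i = insert c T).card / N.card := by
    rw [Nat.le_div_iff_mul_le (by omega : 0 < N.card)]
    calc ℓ * N.card ≤ N'.card * k := hquota
      _ ≤ (N.filter fun i => A4 i = insert c T).card * k := Nat.mul_le_mul_right _ hm
      _ = k * (N.filter fun i => A4 i = insert c T).card := Nat.mul_comm _ _
  omega
end

section
/- If a proportionality notion f refines PJR (every committee in f(I) satisfies PJR for all instances I) and f satisfies monotonicity, then f refines PJR+. -/
open Finset


/-- If a proportionality notion refines PJR and satisfies monotonicity,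
then it refines PJR+. -/
theorem pjr_refinement_monotone_refines_pjrplus
    (f : Finset ℕ → (ℕ → Finset ℕ) → Finset ℕ → ℕ → Finset ℕ → Prop)
    (hPJR : ∀ N A C k W, f N A C k W → PJR N A k W)
    (hMon : ∀ N A C k W A', f N A C k W →
      (∀ i ∈ N, A i ⊆ A' i ∧ A' i \ A i ⊆ W) → f N A' C k W) :
    ∀ N A C k W, f N A C k W → PJRplus N A k W := by
  intro N A C k W hf ℓ hℓ1 hℓk c hc N' hN' hcA hlarge
  by_contra hlt
  push_neg at hlt
  set U := N'.biUnion fun i => A i ∩ W with hU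
  have hUW : U ⊆ W := by
    intro x hx
    simp only [hU, mem_biUnion, mem_inter] at hx
    obtain ⟨i, _, _, h⟩ := hx
    exact h
  set m := min (ℓ - 1) W.card with hm
  have hUm : U.card ≤ m := by
    refine le_min (by omega) (card_le_card hUW)
  obtain ⟨S, hUS, hSW, hSc⟩ :=
    Finset.exists_subsuperset_card_eq hUW hUm (min_le_right _ _)
  have hcS : c ∉ S := fun h => hc (hSW h)
  set T := insert c S with hT
  have hTcard : T.card = m + 1 := by rw [hT, card_insert_of_notMem hcS, hSc]
  set A' := fun i => if i ∈ N' then A i ∪ T else A i with hA'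
  have hf' : f N A' C k W := by
    apply hMon N A C k W A' hf
    intro i hi
    by_cases h : i ∈ N'
    · constructor
      · simp [hA', h]
      · intro x hx
        simp only [hA', if_pos h, mem_sdiff, mem_union] at hx
        obtain ⟨hx1 | hx1, hx2⟩ := hx
        · exact absurd hx1 hx2
        · rcases mem_insert.mp hx1 with rfl | hxS
          · exact absurd (hcA i h) hx2
          · exact hSW hxS
    · simp [hA', h]
  have hpjr := hPJR N A' C k W hf' (m + 1) (by omega)
    (by have := min_le_left (ℓ - 1) W.card; omega) N' hN'
    (le_trans (Nat.mul_le_mul_right _ (by have := min_le_left (ℓ - 1) W.card; omega)) hlarge)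
    ⟨T, le_of_eq hTcard.symm, fun i hi => by
      simp only [hA', if_pos hi]; exact subset_union_right⟩
  have hsub : (N'.biUnion fun i => A' i ∩ W) ⊆ S := by
    intro x hx
    simp only [mem_biUnion, mem_inter] at hx
    obtain ⟨i, hi, hx1, hx2⟩ := hx
    simp only [hA', if_pos hi, mem_union] at hx1
    rcases hx1 with hx1 | hx1
    · exact hUS (mem_biUnion.mpr ⟨i, hi, mem_inter.mpr ⟨hx1, hx2⟩⟩)
    · rcases mem_insert.mp hx1 with rfl | hxS
      · exact absurd hx2 hc
      · exact hxS
  have := card_le_card hsub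
  omega
end

section
/- Any proportionality notion f satisfying independence of losers, monotonicity, robustness to fully satisfied voters, independence of approval swaps, and lower quota for party-lists is a refinement of EJR+. -/
open Finset


private lemma irrel_ballots (f : Finset ℕ → (ℕ → Finset ℕ) → Finset ℕ → ℕ → Finset ℕ → Prop)
    (hMon : ∀ N A C k W A', f N A C k W →
      (∀ i ∈ N, A i ⊆ A' i ∧ A' i \ A i ⊆ W) → f N A' C k W)
    {N : Finset ℕ} {A : ℕ → Finset ℕ} {C : Finset ℕ} {k : ℕ} {W : Finset ℕ}
    (A' : ℕ → Finset ℕ) (h : ∀ i ∈ N, A' i = A i) (hf : f N A C k W) :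
    f N A' C k W :=
  hMon N A C k W A' hf (fun i hi => by
    rw [h i hi]; exact ⟨Finset.Subset.refl _, by simp⟩)

private lemma remove_losers (f : Finset ℕ → (ℕ → Finset ℕ) → Finset ℕ → ℕ → Finset ℕ → Prop)
    (hIoL : ∀ N A C k W, f N A C k W → ∀ c ∈ C, c ∉ W →
      f N (fun i => A i ∩ C.erase c) (C.erase c) k W)
    (hMon : ∀ N A C k W A', f N A C k W →
      (∀ i ∈ N, A i ⊆ A' i ∧ A' i \ A i ⊆ W) → f N A' C k W)
    (c : ℕ) (W : Finset ℕ) :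
    ∀ n (C : Finset ℕ), C.card = n → ∀ (N : Finset ℕ) (A : ℕ → Finset ℕ) (k : ℕ),
    insert c W ⊆ C → (∀ i ∈ N, A i ⊆ C) → f N A C k W →
    f N (fun i => A i ∩ insert c W) (insert c W) k W := by
  intro n
  induction n using Nat.strong_induction_on with
  | _ n ih =>
    intro C hC N A k hsub hAC hf
    by_cases hCeq : C ⊆ insert c W
    · have hCE : C = insert c W := Finset.Subset.antisymm hCeq hsub
      rw [hCE] at hf
      exact irrel_ballots f hMon _
        (fun i hi => Finset.inter_eq_left.mpr (hCE ▸ hAC i hi)) hf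
    · obtain ⟨c', hc'C, hc'W⟩ := Finset.not_subset.mp hCeq
      have hf' := hIoL N A C k W hf c' hc'C (fun h => hc'W (Finset.mem_insert_of_mem h))
      have hsub' : insert c W ⊆ C.erase c' := by
        intro x hx
        exact Finset.mem_erase.mpr ⟨fun he => hc'W (he ▸ hx), hsub hx⟩
      have hcard : (C.erase c').card < n := by
        rw [← hC]; exact Finset.card_erase_lt_of_mem hc'C
      have hstep := ih _ hcard (C.erase c') rfl N (fun i => A i ∩ C.erase c') k hsub'
        (fun i _ => Finset.inter_subset_right) hf'
      refine irrel_ballots f hMon _ (fun i _ => ?_) hstep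
      rw [Finset.inter_assoc, Finset.inter_eq_right.mpr hsub']


/-- Any proportionality notion satisfying independence of losers, monotonicity,
robustness to fully satisfied voters, independence of approval swaps, and
lower quota for party-lists is a refinement of EJR+. -/
theorem refinement_of_ejrplus
    (f : Finset ℕ → (ℕ → Finset ℕ) → Finset ℕ → ℕ → Finset ℕ → Prop)
    (hIoL : ∀ N A C k W, f N A C k W → ∀ c ∈ C, c ∉ W →
      f N (fun i => A i ∩ C.erase c) (C.erase c) k W)
    (hMon : ∀ N A C k W A', f N A C k W →
      (∀ i ∈ N, A i ⊆ A' i ∧ A' i \ A i ⊆ W) → f N A' C k W)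
    (hRob : ∀ N A C k W A', f N A C k W →
      (∀ i ∈ N, A' i = A i ∨ A' i ⊆ A i ∩ W) → f N A' C k W)
    (hSwap : ∀ N A C k W A', f N A C k W →
      (∀ i ∈ N, A' i \ W = A i \ W ∧ (A' i ∩ W).card = (A i ∩ W).card) →
      f N A' C k W)
    (hLQ : ∀ N A C k P W, IsPartyList N C A P → f N A C k W → LowerQuota N A k P W) :
    ∀ N A C k W, N.Nonempty → (∀ i ∈ N, A i ⊆ C) → W ⊆ C → W.card = k →
      f N A C k W → EJRplus N A k W := by
  intro N A C k W hN hAC hWC hWk hf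
  intro ℓ hℓ1 hℓk c hcW N' hN'N hc hcount
  by_contra hcon
  push_neg at hcon
  have hNcard : 0 < N.card := Finset.card_pos.mpr hN
  have hN'card : 0 < N'.card := by
    rcases Nat.eq_zero_or_pos N'.card with h0 | h
    · exfalso
      rw [h0, Nat.zero_mul] at hcount
      have h1 : 1 * 1 ≤ ℓ * N.card := Nat.mul_le_mul hℓ1 hNcard
      have h2 := h1.trans hcount
      simp at h2
    · exact h
  obtain ⟨i₀, hi₀⟩ := Finset.card_pos.mp hN'card
  have hcC : c ∈ C := hAC i₀ (hN'N hi₀) (hc i₀ hi₀)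
  -- the common set T of ℓ-1 winners
  obtain ⟨T, hTW, hTcard⟩ : ∃ T ⊆ W, T.card = ℓ - 1 :=
    Finset.exists_subset_card_eq (by omega)
  have hcT : c ∉ T := fun h => hcW (hTW h)
  -- Step 1: remove losers other than c
  set C₁ : Finset ℕ := insert c W with hC₁
  set A₁ : ℕ → Finset ℕ := fun i => A i ∩ C₁ with hA₁
  have hf₁ : f N A₁ C₁ k W :=
    remove_losers f hIoL hMon c W C.card C rfl N A k
      (Finset.insert_subset hcC hWC) hAC hf
  have hA₁W : ∀ i, A₁ i ∩ W = A i ∩ W := by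
    intro i; ext x
    simp only [hA₁, hC₁, Finset.mem_inter, Finset.mem_insert]
    tauto
  -- Step 2: robustness, empty ballots outside N'
  set A₂ : ℕ → Finset ℕ := fun i => if i ∈ N' then A₁ i else ∅ with hA₂
  have hf₂ : f N A₂ C₁ k W := by
    refine hRob N A₁ C₁ k W A₂ hf₁ (fun i _ => ?_)
    by_cases hi : i ∈ N'
    · left; simp [hA₂, hi]
    · right; simp [hA₂, hi]
  -- choose subsets of T of the right sizes
  have hSex : ∀ i, ∃ s : Finset ℕ, i ∈ N' → s ⊆ T ∧ s.card = (A i ∩ W).card := by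
    intro i
    by_cases hi : i ∈ N'
    · have hle : (A i ∩ W).card ≤ T.card := by
        have := hcon i hi; omega
      obtain ⟨s, hs1, hs2⟩ := Finset.exists_subset_card_eq hle
      exact ⟨s, fun _ => ⟨hs1, hs2⟩⟩
    · exact ⟨∅, fun h => absurd h hi⟩
  choose S hS using hSex
  -- Step 3: swaps
  set A₃ : ℕ → Finset ℕ := fun i => if i ∈ N' then insert c (S i) else ∅ with hA₃
  have hf₃ : f N A₃ C₁ k W := by
    refine hSwap N A₂ C₁ k W A₃ hf₂ (fun i _ => ?_)
    by_cases hi : i ∈ N'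
    · have hSi := hS i hi
      have hciA : c ∈ A i := hc i hi
      constructor
      · have h1 : A₃ i \ W = {c} := by
          ext x
          simp only [hA₃, if_pos hi, Finset.mem_sdiff, Finset.mem_insert,
            Finset.mem_singleton]
          constructor
          · rintro ⟨hx | hx, hxW⟩
            · exact hx
            · exact absurd (hTW (hSi.1 hx)) hxW
          · rintro rfl; exact ⟨Or.inl rfl, hcW⟩
        have h2 : A₂ i \ W = {c} := by
          ext x
          simp only [hA₂, if_pos hi, hA₁, hC₁, Finset.mem_sdiff, Finset.mem_inter,
            Finset.mem_insert, Finset.mem_singleton]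
          constructor
          · rintro ⟨⟨hxA, hx | hx⟩, hxW⟩
            · exact hx
            · exact absurd hx hxW
          · rintro rfl; exact ⟨⟨hciA, Or.inl rfl⟩, hcW⟩
        rw [h1, h2]
      · have h3 : A₃ i ∩ W = S i := by
          ext x
          simp only [hA₃, if_pos hi, Finset.mem_inter, Finset.mem_insert]
          constructor
          · rintro ⟨hx | hx, hxW⟩
            · exact absurd (hx ▸ hxW) hcW
            · exact hx
          · intro hx; exact ⟨Or.inr hx, hTW (hSi.1 hx)⟩
        have h4 : A₂ i ∩ W = A i ∩ W := by
          rw [hA₂]; simp only [if_pos hi]; exact hA₁W i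
        rw [h3, h4, hSi.2]
    · constructor <;> simp [hA₃, hA₂, hi]
  -- Step 4: monotonicity to a party-list profile
  set A₄ : ℕ → Finset ℕ := fun i => if i ∈ N' then insert c T else W \ T with hA₄
  have hf₄ : f N A₄ C₁ k W := by
    refine hMon N A₃ C₁ k W A₄ hf₃ (fun i _ => ?_)
    by_cases hi : i ∈ N'
    · have hSi := hS i hi
      constructor
      · simp only [hA₃, hA₄, if_pos hi]
        exact Finset.insert_subset_insert c hSi.1
      · intro x hx
        simp only [hA₃, hA₄, if_pos hi, Finset.mem_sdiff, Finset.mem_insert] at hx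
        obtain ⟨hx1 | hx1, hx2⟩ := hx
        · exact absurd (Or.inl hx1) hx2
        · exact hTW hx1
    · constructor
      · simp [hA₃, hA₄, hi]
      · intro x hx
        simp only [hA₃, hA₄, if_neg hi, Finset.mem_sdiff, Finset.mem_sdiff] at hx
        exact hx.1.1
  -- the party list
  set P : Finset (Finset ℕ) := {insert c T, W \ T} with hP
  have hWTne : (W \ T).Nonempty := by
    rw [← Finset.card_pos, Finset.card_sdiff_of_subset hTW]
    omega
  have hdisj : Disjoint (insert c T) (W \ T) := by
    rw [Finset.disjoint_left]
    intro x hx hx'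
    rw [Finset.mem_sdiff] at hx'
    rcases Finset.mem_insert.mp hx with rfl | hx
    · exact hcW hx'.1
    · exact hx'.2 hx
  have hPL : IsPartyList N C₁ A₄ P := by
    refine ⟨?_, ?_, ?_, ?_⟩
    · intro p hp
      rcases Finset.mem_insert.mp hp with rfl | hp
      · exact Finset.insert_nonempty _ _
      · rw [Finset.mem_singleton] at hp; exact hp ▸ hWTne
    · intro p hp q hq hpq
      rcases Finset.mem_insert.mp hp with rfl | hp <;>
        rcases Finset.mem_insert.mp hq with rfl | hq
      · exact absurd rfl hpq
      · rw [Finset.mem_singleton] at hq; exact hq ▸ hdisj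
      · rw [Finset.mem_singleton] at hp; exact hp ▸ hdisj.symm
      · rw [Finset.mem_singleton] at hp hq; exact absurd (hp.trans hq.symm) hpq
    · ext x
      simp only [hP, Finset.mem_biUnion, Finset.mem_insert, Finset.mem_singleton,
        id_eq, hC₁]
      constructor
      · rintro ⟨p, rfl | hp, hx⟩
        · rcases Finset.mem_insert.mp hx with rfl | hx
          · exact Or.inl rfl
          · exact Or.inr (hTW hx)
        · subst hp
          exact Or.inr (Finset.mem_sdiff.mp hx).1
      · rintro (rfl | hx)
        · exact ⟨insert x T, Or.inl rfl, Finset.mem_insert_self _ _⟩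
        · by_cases hxT : x ∈ T
          · exact ⟨insert c T, Or.inl rfl, Finset.mem_insert_of_mem hxT⟩
          · exact ⟨W \ T, Or.inr rfl, Finset.mem_sdiff.mpr ⟨hx, hxT⟩⟩
    · intro i _
      by_cases hi : i ∈ N' <;> simp [hA₄, hP, hi]
  have hlq := hLQ N A₄ C₁ k P W hPL hf₄ (insert c T) (Finset.mem_insert_self _ _)
  have hfilter : (N.filter fun i => A₄ i = insert c T) = N' := by
    ext i
    simp only [Finset.mem_filter, hA₄]
    constructor
    · rintro ⟨hiN, hieq⟩
      by_cases hi : i ∈ N'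
      · exact hi
      · rw [if_neg hi] at hieq
        exfalso
        have : c ∈ W \ T := hieq ▸ Finset.mem_insert_self c T
        exact hcW (Finset.mem_sdiff.mp this).1
    · intro hi
      exact ⟨hN'N hi, if_pos hi⟩
  have hWinter : W ∩ insert c T = T := by
    ext x
    simp only [Finset.mem_inter, Finset.mem_insert]
    constructor
    · rintro ⟨hxW, rfl | hx⟩
      · exact absurd hxW hcW
      · exact hx
    · intro hx; exact ⟨hTW hx, Or.inr hx⟩
  have hcardins : (insert c T).card = ℓ := by
    rw [Finset.card_insert_of_notMem hcT, hTcard]; omega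
  have hquota : ℓ ≤ k * N'.card / N.card := by
    rw [Nat.le_div_iff_mul_le hNcard]
    calc ℓ * N.card ≤ N'.card * k := hcount
      _ = k * N'.card := Nat.mul_comm _ _
  rw [hfilter, hWinter, hcardins, hTcard] at hlq
  omega
end

section
/- If a proportionality notion f refines PJR+ and satisfies independence of approval swaps, then f refines EJR+. -/
open Finset


/-- If a proportionality notion refines PJR+ and satisfies independence of
approval swaps, then it refines EJR+. -/
theorem pjrplus_refinement_swaps_refines_ejrplus
    (f : Finset ℕ → (ℕ → Finset ℕ) → Finset ℕ → ℕ → Finset ℕ → Prop)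
    (hPJRp : ∀ N A C k W, f N A C k W → PJRplus N A k W)
    (hSwap : ∀ N A C k W A', f N A C k W →
      (∀ i ∈ N, A' i \ W = A i \ W ∧ (A' i ∩ W).card = (A i ∩ W).card) →
      f N A' C k W) :
    ∀ N A C k W, f N A C k W → EJRplus N A k W := by
  intro N A C k W hf ℓ hℓ1 hℓk c hc N' hN'N hcA hlarge
  by_contra h
  push_neg at h
  classical
  set L := W.sort (· ≤ ·) with hL
  have hLnd : L.Nodup := W.sort_nodup _
  have hLlen : L.length = W.card := W.length_sort _
  have hmemL : ∀ x, x ∈ L ↔ x ∈ W := fun x => W.mem_sort _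
  have htake_sub : ∀ n, (L.take n).toFinset ⊆ W := by
    intro n x hx
    rw [List.mem_toFinset] at hx
    exact (hmemL x).1 (List.mem_of_mem_take hx)
  have htake_card : ∀ n, (L.take n).toFinset.card = min n W.card := by
    intro n
    rw [List.toFinset_card_of_nodup (hLnd.sublist (List.take_sublist _ _)),
      List.length_take, hLlen]
  set A' : ℕ → Finset ℕ := fun i =>
    if i ∈ N' then (A i \ W) ∪ (L.take ((A i ∩ W).card)).toFinset else A i with hA'
  have hA'diff : ∀ i, A' i \ W = A i \ W := by
    intro i
    by_cases hi : i ∈ N'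
    · simp only [hA', if_pos hi, union_sdiff_distrib, sdiff_sdiff_self_left]
      rw [sdiff_eq_empty_iff_subset.2 (htake_sub _)]
      simp
    · simp [hA', hi]
  have hA'int : ∀ i ∈ N', A' i ∩ W = (L.take ((A i ∩ W).card)).toFinset := by
    intro i hi
    simp only [hA', if_pos hi, union_inter_distrib_right]
    rw [inter_eq_left.2 (htake_sub _), sdiff_inter_self]
    simp
  have hA'card : ∀ i, (A' i ∩ W).card = (A i ∩ W).card := by
    intro i
    by_cases hi : i ∈ N'
    · rw [hA'int i hi, htake_card, min_eq_left (card_le_card inter_subset_right)]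
    · simp [hA', hi]
  have hf' : f N A' C k W := hSwap N A C k W A' hf (fun i _ => ⟨hA'diff i, hA'card i⟩)
  have hcA' : ∀ i ∈ N', c ∈ A' i := by
    intro i hi
    have : c ∈ A' i \ W := by
      rw [hA'diff]; exact mem_sdiff.2 ⟨hcA i hi, hc⟩
    exact (mem_sdiff.1 this).1
  have hpjr := hPJRp N A' C k W hf' ℓ hℓ1 hℓk c hc N' hN'N hcA' hlarge
  have hsub : (N'.biUnion fun i => A' i ∩ W) ⊆ (L.take (ℓ - 1)).toFinset := by
    intro x hx
    rw [mem_biUnion] at hx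
    obtain ⟨i, hi, hxi⟩ := hx
    rw [hA'int i hi] at hxi
    rw [List.mem_toFinset] at hxi ⊢
    exact List.mem_of_mem_take (l := L.take (ℓ - 1))
      (by rw [List.take_take, min_eq_left (Nat.le_sub_one_of_lt (h i hi))]; exact hxi)
  have hle : (N'.biUnion fun i => A' i ∩ W).card ≤ ℓ - 1 := by
    calc (N'.biUnion fun i => A' i ∩ W).card ≤ (L.take (ℓ - 1)).toFinset.card :=
          card_le_card hsub
      _ ≤ ℓ - 1 := by rw [htake_card]; exact min_le_left _ _
  omega
end

section
/- The natural witness function of EJR+ is a valid witness function: (i) W satisfies EJR+ in I iff the set of natural witnesses is empty, and (ii) natural witnesses are preserved under local embeddings into instances with the same number of voters. -/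
open Finset


/-- `(N', W)` (with profile `A`) locally embeds into `(N₂', W₂)` (with profile `A₂`):
there are a bijection `φN : N' → N₂'` and an injection
`φC : W ∪ ⋃_{i∈N'} A_i → W₂ ∪ ⋃_{i∈N₂'} A₂_i` mapping `W` onto `W₂` and preserving
approvals of voters in `N'`. -/
def LocallyEmbeds (N' : Finset ℕ) (A : ℕ → Finset ℕ) (W : Finset ℕ)
    (N₂' : Finset ℕ) (A₂ : ℕ → Finset ℕ) (W₂ : Finset ℕ) : Prop :=
  ∃ φN φC : ℕ → ℕ,
    Set.BijOn φN ↑N' ↑N₂' ∧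
    Set.InjOn φC ↑(W ∪ N'.biUnion A) ∧
    Set.MapsTo φC ↑(W ∪ N'.biUnion A) ↑(W₂ ∪ N₂'.biUnion A₂) ∧
    W.image φC = W₂ ∧
    ∀ j ∈ N', ∀ c ∈ W ∪ N'.biUnion A, (c ∈ A j ↔ φC c ∈ A₂ (φN j))

/-- `N'` is a natural witness of an EJR+ violation of `W` in `(N, A, C, k)`:
there are `ℓ ∈ [k]` and `c ∈ C \\ W` with `N' ⊆ N_c`, `|N'| ≥ ℓ·n/k`, and
`|A_i ∩ W| < ℓ` for all `i ∈ N'`. -/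
def NaturalEJRplusWitness (N C : Finset ℕ) (A : ℕ → Finset ℕ) (k : ℕ) (W : Finset ℕ)
    (N' : Finset ℕ) : Prop :=
  ∃ ℓ : ℕ, 1 ≤ ℓ ∧ ℓ ≤ k ∧ ∃ c ∈ C, c ∉ W ∧ N' ⊆ N ∧ (∀ i ∈ N', c ∈ A i) ∧
    ℓ * N.card ≤ N'.card * k ∧ ∀ i ∈ N', (A i ∩ W).card < ℓ

/-- The natural witness function of EJR+ is a valid witness function:
(i) `W` satisfies EJR+ iff there is no natural witness, and (ii) natural witnesses
are preserved under local embeddings into instances with the same number of voters. -/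
theorem ejrplus_natural_witness_is_witness_function :
    (∀ (N C : Finset ℕ) (A : ℕ → Finset ℕ) (k : ℕ) (W : Finset ℕ),
      N.Nonempty → (∀ i ∈ N, A i ⊆ C) → W ⊆ C →
      (EJRplus N A k W ↔ ∀ N' : Finset ℕ, ¬ NaturalEJRplusWitness N C A k W N')) ∧
    (∀ (N C : Finset ℕ) (A : ℕ → Finset ℕ) (k : ℕ) (W : Finset ℕ) (N' : Finset ℕ)
        (N₂ C₂ : Finset ℕ) (A₂ : ℕ → Finset ℕ) (W₂ : Finset ℕ) (N₂' : Finset ℕ),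
      N.Nonempty → N₂.card = N.card → N₂' ⊆ N₂ → (∀ i ∈ N₂, A₂ i ⊆ C₂) →
      NaturalEJRplusWitness N C A k W N' →
      LocallyEmbeds N' A W N₂' A₂ W₂ →
      NaturalEJRplusWitness N₂ C₂ A₂ k W₂ N₂') := by
  constructor
  · intro N C A k W hN hAC _
    constructor
    · rintro hE N' ⟨ℓ, hℓ1, hℓk, c, hcC, hcW, hN'N, happ, hsize, hsmall⟩
      obtain ⟨i, hi, hge⟩ := hE ℓ hℓ1 hℓk c hcW N' hN'N happ hsize
      exact absurd hge (not_le.mpr (hsmall i hi))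
    · intro h ℓ hℓ1 hℓk c hcW N' hN'N happ hsize
      by_contra hcon
      push_neg at hcon
      have hNne : N'.Nonempty := by
        rcases N'.eq_empty_or_nonempty with rfl | h'
        · simp only [Finset.card_empty, Nat.zero_mul] at hsize
          have : 0 < ℓ * N.card := Nat.mul_pos hℓ1 (Finset.card_pos.mpr hN)
          omega
        · exact h'
      obtain ⟨i0, hi0⟩ := hNne
      have hcC : c ∈ C := hAC i0 (hN'N hi0) (happ i0 hi0)
      exact h N' ⟨ℓ, hℓ1, hℓk, c, hcC, hcW, hN'N, happ, hsize, hcon⟩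
  · rintro N C A k W N' N₂ C₂ A₂ W₂ N₂' hN hcard hN₂'sub hA₂C₂
      ⟨ℓ, hℓ1, hℓk, c, hcC, hcW, hN'N, happ, hsize, hsmall⟩
      ⟨φN, φC, hbij, hinj, hmaps, hW₂, hiff⟩
    have hNne : N'.Nonempty := by
      rcases N'.eq_empty_or_nonempty with rfl | h'
      · simp only [Finset.card_empty, Nat.zero_mul] at hsize
        have : 0 < ℓ * N.card := Nat.mul_pos hℓ1 (Finset.card_pos.mpr hN)
        omega
      · exact h'
    obtain ⟨i0, hi0⟩ := hNne
    have hcdom : c ∈ W ∪ N'.biUnion A :=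
      Finset.mem_union_right _ (Finset.mem_biUnion.mpr ⟨i0, hi0, happ i0 hi0⟩)
    have hc2 : φC c ∈ W₂ ∪ N₂'.biUnion A₂ := by
      have : φC c ∈ (↑(W₂ ∪ N₂'.biUnion A₂) : Set ℕ) := hmaps (by exact_mod_cast hcdom)
      exact_mod_cast this
    have hc2W : φC c ∉ W₂ := by
      intro hmem
      rw [← hW₂, Finset.mem_image] at hmem
      obtain ⟨w, hw, hwc⟩ := hmem
      have hwdom : w ∈ W ∪ N'.biUnion A := Finset.mem_union_left _ hw
      have : w = c := hinj (by exact_mod_cast hwdom) (by exact_mod_cast hcdom) hwc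
      exact hcW (this ▸ hw)
    have himg : N₂' = N'.image φN := by
      apply Finset.coe_injective
      rw [Finset.coe_image]
      exact Set.Subset.antisymm hbij.2.2 (Set.MapsTo.image_subset hbij.1)
    have hcardeq : N₂'.card = N'.card := by
      rw [himg, Finset.card_image_of_injOn hbij.2.1]
    have hc2C : φC c ∈ C₂ := by
      rcases Finset.mem_union.mp hc2 with h | h
      · exact absurd h hc2W
      · obtain ⟨i, hi, hci⟩ := Finset.mem_biUnion.mp h
        exact hA₂C₂ i (hN₂'sub hi) hci
    refine ⟨ℓ, hℓ1, hℓk, φC c, hc2C, hc2W, hN₂'sub, ?_, ?_, ?_⟩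
    · intro j₂ hj₂
      obtain ⟨j, hj, rfl⟩ := Finset.mem_image.mp (himg ▸ hj₂)
      exact (hiff j hj c hcdom).mp (happ j hj)
    · rw [hcard, hcardeq]; exact hsize
    · intro j₂ hj₂
      obtain ⟨j, hj, rfl⟩ := Finset.mem_image.mp (himg ▸ hj₂)
      have hsub : A₂ (φN j) ∩ W₂ ⊆ (A j ∩ W).image φC := by
        intro x hx
        obtain ⟨hxA, hxW⟩ := Finset.mem_inter.mp hx
        rw [← hW₂, Finset.mem_image] at hxW
        obtain ⟨w, hw, rfl⟩ := hxW
        have hwdom : w ∈ W ∪ N'.biUnion A := Finset.mem_union_left _ hw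
        have : w ∈ A j := (hiff j hj w hwdom).mpr hxA
        exact Finset.mem_image_of_mem _ (Finset.mem_inter.mpr ⟨this, hw⟩)
      calc (A₂ (φN j) ∩ W₂).card ≤ ((A j ∩ W).image φC).card := Finset.card_le_card hsub
        _ ≤ (A j ∩ W).card := Finset.card_image_le
        _ < ℓ := hsmall j hj
end

section
/- Every witness-based proportionality notion satisfies independence of losers; if moreover the witness function is cohesiveness-based, the notion satisfies robustness to fully satisfied voters. -/
open Finset

/-- Every witness-based proportionality notion satisfies independence of losers;
if moreover the witness function is cohesiveness-based, the notion also satisfies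
robustness to fully satisfied voters. -/
theorem witnessBased_iol_and_robustness
    (f : Finset ℕ → (ℕ → Finset ℕ) → Finset ℕ → ℕ → Finset ℕ → Prop)
    (w : Finset ℕ → (ℕ → Finset ℕ) → Finset ℕ → ℕ → Finset ℕ → Finset ℕ → Prop)
    (hval : ∀ N A C k W N', w N A C k W N' → N'.Nonempty ∧ N' ⊆ N)
    (hiff : ∀ N A C k W, f N A C k W ↔ ∀ N', ¬ w N A C k W N')
    (hemb : ∀ N A C k W N' N₂ A₂ C₂ W₂ N₂',
      w N A C k W N' → N₂.card = N.card → N₂' ⊆ N₂ →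
      LocallyEmbeds N' A W N₂' A₂ W₂ → w N₂ A₂ C₂ k W₂ N₂') :
    (∀ N A C k W, (∀ i ∈ N, A i ⊆ C) → W ⊆ C → f N A C k W →
      ∀ c ∈ C, c ∉ W → f N (fun i => A i ∩ C.erase c) (C.erase c) k W) ∧
    ((∀ N A C k W N', w N A C k W N' → ∃ c, c ∉ W ∧ ∀ i ∈ N', c ∈ A i) →
      ∀ N A C k W A', (∀ i ∈ N, A i ⊆ C) → W ⊆ C → f N A C k W →
        (∀ i ∈ N, A' i = A i ∨ A' i ⊆ A i ∩ W) → f N A' C k W) := by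
  constructor
  · intro N A C k W hAC hWC hf c hc hcW
    rw [hiff] at hf ⊢
    intro N' hw
    apply hf N'
    obtain ⟨hne, hsub⟩ := hval _ _ _ _ _ _ hw
    refine hemb _ _ _ _ _ _ _ _ _ _ _ hw rfl hsub ⟨id, id, ?_, ?_, ?_, ?_, ?_⟩
    · exact Set.bijOn_id _
    · exact Set.injOn_id _
    · intro x hx
      simp only [Finset.coe_union, Set.mem_union, Finset.mem_coe,
        Finset.mem_biUnion] at hx ⊢
      rcases hx with h | ⟨i, hi, hxi⟩
      · exact Or.inl h
      · exact Or.inr ⟨i, hi, (Finset.mem_inter.mp hxi).1⟩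
    · exact Finset.image_id
    · intro j hj x hx
      simp only [id_eq, Finset.mem_inter]
      constructor
      · intro h; exact h.1
      · intro h
        refine ⟨h, ?_⟩
        simp only [Finset.mem_union, Finset.mem_biUnion] at hx
        rcases hx with hxW | ⟨i, hi, hxi⟩
        · exact Finset.mem_erase.mpr ⟨fun he => hcW (he ▸ hxW), hWC hxW⟩
        · exact (Finset.mem_inter.mp hxi).2
  · intro hcoh N A C k W A' hAC hWC hf hA'
    rw [hiff] at hf ⊢
    intro N' hw
    apply hf N'
    obtain ⟨hne, hsub⟩ := hval _ _ _ _ _ _ hw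
    obtain ⟨c, hcW, hcA⟩ := hcoh _ _ _ _ _ _ hw
    have heq : ∀ i ∈ N', A' i = A i := by
      intro i hi
      rcases hA' i (hsub hi) with h | h
      · exact h
      · exact absurd (Finset.mem_inter.mp (h (hcA i hi))).2 hcW
    refine hemb _ _ _ _ _ _ _ _ _ _ _ hw rfl hsub ⟨id, id, ?_, ?_, ?_, ?_, ?_⟩
    · exact Set.bijOn_id _
    · exact Set.injOn_id _
    · intro x hx
      simp only [Finset.coe_union, Set.mem_union, Finset.mem_coe,
        Finset.mem_biUnion] at hx ⊢
      rcases hx with h | ⟨i, hi, hxi⟩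
      · exact Or.inl h
      · exact Or.inr ⟨i, hi, (heq i hi) ▸ hxi⟩
    · exact Finset.image_id
    · intro j hj x hx
      simp only [id_eq, heq j hj]
end

section
/- Let f be a lower quota extension with witness function w such that (f, w) is cohesiveness-based and satisfies individual discontentment. Then every committee satisfying EJR+ is in f(I) for all instances I (i.e., EJR+ refines f). -/
open Finset


/-- Let `f` be a lower quota extension with a witness function `w` such that
`(f, w)` is cohesiveness-based and satisfies individual discontentment.
Then EJR+ refines `f`: every committee satisfying EJR+ is selected by `f`. -/
theorem ejrplus_refines_f
    (f : Finset ℕ → (ℕ → Finset ℕ) → Finset ℕ → ℕ → Finset ℕ → Prop)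
    (w : Finset ℕ → (ℕ → Finset ℕ) → Finset ℕ → ℕ → Finset ℕ → Finset ℕ → Prop)
    (hval : ∀ N A C k W N', w N A C k W N' → N'.Nonempty ∧ N' ⊆ N)
    (hiff : ∀ N A C k W, f N A C k W ↔ ∀ N', ¬ w N A C k W N')
    (hemb : ∀ N A C k W N' N₂ A₂ C₂ W₂ N₂',
      w N A C k W N' → N₂.card = N.card → N₂' ⊆ N₂ →
      LocallyEmbeds N' A W N₂' A₂ W₂ → w N₂ A₂ C₂ k W₂ N₂')
    (hcoh : ∀ N A C k W N', w N A C k W N' → ∃ c, c ∉ W ∧ ∀ i ∈ N', c ∈ A i)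
    (hLQE : ∀ N A C k P W, IsPartyList N C A P → N.Nonempty → W ⊆ C → W.card = k →
      (f N A C k W ↔ LowerQuota N A k P W))
    (hid : ∀ N A C k W N', w N A C k W N' → ∀ j ∈ N',
      w N (fun i => if i ∈ N' then A j else A i) C k W N') :
    ∀ N A C k W, N.Nonempty → (∀ i ∈ N, A i ⊆ C) → W ⊆ C → W.card = k →
      EJRplus N A k W → f N A C k W := by
  intro N A C k W hN hAC hWC hWk hEJR
  by_contra hf
  rw [hiff] at hf
  push_neg at hf
  obtain ⟨N', hw⟩ := hf
  obtain ⟨hN'ne, hN'sub⟩ := hval _ _ _ _ _ _ hw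
  obtain ⟨c, hcW, hcA⟩ := hcoh _ _ _ _ _ _ hw
  have hn1 : 1 ≤ N.card := Finset.card_pos.mpr hN
  set ℓ : ℕ := k * N'.card / N.card with hℓ
  -- choose a voter j ∈ N' whose ballot gets its lower quota
  have hj : ∃ j ∈ N', min ℓ (A j).card ≤ (W ∩ A j).card := by
    rcases Nat.eq_zero_or_pos ℓ with h0 | h1
    · obtain ⟨j, hj⟩ := hN'ne
      exact ⟨j, hj, by simp [h0]⟩
    · have hℓk : ℓ ≤ k := by
        calc ℓ ≤ k * N.card / N.card :=
              Nat.div_le_div_right (Nat.mul_le_mul_left _ (Finset.card_le_card hN'sub))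
          _ = k := Nat.mul_div_cancel k hn1
      obtain ⟨j, hjN', hjcard⟩ := hEJR ℓ h1 hℓk c hcW N' hN'sub hcA
        (by calc ℓ * N.card ≤ k * N'.card := Nat.div_mul_le_self _ _
              _ = N'.card * k := mul_comm _ _)
      exact ⟨j, hjN', le_trans (min_le_left _ _) (by rwa [Finset.inter_comm])⟩
  obtain ⟨j, hjN', hjm⟩ := hj
  have hcj : c ∈ A j := hcA j hjN'
  have hw' := hid _ _ _ _ _ _ hw j hjN'
  set A' : ℕ → Finset ℕ := fun i => if i ∈ N' then A j else A i with hA'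
  by_cases hq : (W \ A j).Nonempty
  · -- two parties: A j and W \ A j
    set A₂ : ℕ → Finset ℕ := fun i => if i ∈ N' then A j else W \ A j with hA₂
    have hpq : A j ≠ W \ A j := by
      intro h
      have : c ∈ W \ A j := h ▸ hcj
      exact hcW (Finset.mem_sdiff.mp this).1
    have hPL : IsPartyList N (A j ∪ (W \ A j)) A₂ {A j, W \ A j} := by
      refine ⟨?_, ?_, ?_, ?_⟩
      · intro p hp
        rcases Finset.mem_insert.mp hp with rfl | hp
        · exact ⟨c, hcj⟩
        · rw [Finset.mem_singleton.mp hp]; exact hq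
      · intro p hp q hq' hne
        rcases Finset.mem_insert.mp hp with rfl | hp
        · rcases Finset.mem_insert.mp hq' with rfl | hq''
          · exact absurd rfl hne
          · rw [Finset.mem_singleton.mp hq'']
            exact disjoint_sdiff_self_right
        · rw [Finset.mem_singleton.mp hp]
          rcases Finset.mem_insert.mp hq' with rfl | hq''
          · exact disjoint_sdiff_self_left
          · exact absurd ((Finset.mem_singleton.mp hp).trans
              (Finset.mem_singleton.mp hq'').symm) hne
      · simp
      · intro i _
        by_cases hi : i ∈ N' <;> simp [hA₂, hi]
    have hWsub : W ⊆ A j ∪ (W \ A j) := by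
      intro x hx
      by_cases hxa : x ∈ A j
      · exact Finset.mem_union_left _ hxa
      · exact Finset.mem_union_right _ (Finset.mem_sdiff.mpr ⟨hx, hxa⟩)
    have hLQ : LowerQuota N A₂ k {A j, W \ A j} W := by
      intro p hp
      rcases Finset.mem_insert.mp hp with rfl | hp
      · have hfilter : (N.filter fun i => A₂ i = A j) = N' := by
          ext i
          simp only [Finset.mem_filter, hA₂]
          constructor
          · rintro ⟨_, h⟩
            by_contra hi
            rw [if_neg hi] at h
            exact hpq h.symm
          · intro hi
            exact ⟨hN'sub hi, by rw [if_pos hi]⟩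
        rw [hfilter]
        exact hjm
      · rw [Finset.mem_singleton.mp hp]
        have : W ∩ (W \ A j) = W \ A j := by
          apply Finset.inter_eq_right.mpr
          exact Finset.sdiff_subset
        rw [this]
        exact min_le_right _ _
    have hfA₂ : f N A₂ (A j ∪ (W \ A j)) k W :=
      (hLQE N A₂ (A j ∪ (W \ A j)) k {A j, W \ A j} W hPL hN hWsub hWk).mpr hLQ
    have hemb' : LocallyEmbeds N' A' W N' A₂ W := by
      refine ⟨id, id, Set.bijOn_id _, Set.injOn_id _, ?_, Finset.image_id, ?_⟩
      · have heq : W ∪ N'.biUnion A' = W ∪ N'.biUnion A₂ := by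
          congr 1
          apply Finset.biUnion_congr rfl
          intro i hi
          simp [hA', hA₂, hi]
        simp only [heq]
        exact Set.mapsTo_id _
      · intro i hi c' _
        simp [hA', hA₂, hi]
    have hw₂ : w N A₂ (A j ∪ (W \ A j)) k W N' :=
      hemb N A' C k W N' N A₂ (A j ∪ (W \ A j)) W N' hw' rfl hN'sub hemb'
    exact ((hiff _ _ _ _ _).mp hfA₂) N' hw₂
  · -- W ⊆ A j: single party A j
    have hWAj : W ⊆ A j := by
      intro x hx
      by_contra hxa
      exact hq ⟨x, Finset.mem_sdiff.mpr ⟨hx, hxa⟩⟩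
    set A₂ : ℕ → Finset ℕ := fun _ => A j with hA₂
    have hPL : IsPartyList N (A j) A₂ {A j} := by
      refine ⟨?_, ?_, ?_, ?_⟩
      · intro p hp; rw [Finset.mem_singleton.mp hp]; exact ⟨c, hcj⟩
      · intro p hp q hq' hne
        rw [Finset.mem_singleton.mp hp, Finset.mem_singleton.mp hq'] at hne
        exact absurd rfl hne
      · simp
      · intro i _; simp [hA₂]
    have hLQ : LowerQuota N A₂ k {A j} W := by
      intro p hp
      rw [Finset.mem_singleton.mp hp]
      have hfilter : (N.filter fun i => A₂ i = A j) = N := by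
        apply Finset.filter_true_of_mem; intro i _; rfl
      rw [hfilter]
      have h1 : W ∩ A j = W := Finset.inter_eq_left.mpr hWAj
      have h2 : k * N.card / N.card = k := Nat.mul_div_cancel k hn1
      rw [h1, h2, hWk]
      exact min_le_left _ _
    have hfA₂ : f N A₂ (A j) k W :=
      (hLQE N A₂ (A j) k {A j} W hPL hN hWAj hWk).mpr hLQ
    have hemb' : LocallyEmbeds N' A' W N' A₂ W := by
      refine ⟨id, id, Set.bijOn_id _, Set.injOn_id _, ?_, Finset.image_id, ?_⟩
      · have heq : W ∪ N'.biUnion A' = W ∪ N'.biUnion A₂ := by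
          congr 1
          apply Finset.biUnion_congr rfl
          intro i hi
          simp [hA', hA₂, hi]
        simp only [heq]
        exact Set.mapsTo_id _
      · intro i hi c' _
        simp [hA', hA₂, hi]
    have hw₂ : w N A₂ (A j) k W N' :=
      hemb N A' C k W N' N A₂ (A j) W N' hw' rfl hN'sub hemb'
    exact ((hiff _ _ _ _ _).mp hfA₂) N' hw₂
end

section
/- PJR+ with its natural witness function satisfies merge-proofness: if N' is a natural PJR+ witness for (I, W) and A' agrees with A outside N' while A_i ⊆ A'_i ⊆ ⋃_{j∈N'} A_j for all i ∈ N', then N' is a natural PJR+ witness for ((N, A', C, k), W). -/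
open Finset

/-- `N'` is a natural witness of a PJR+ violation of `W` in `(N, A, C, k)`:
there are `ℓ ∈ [k]` and `c ∈ C \\ W` with `N' ⊆ N_c`, `|N'| ≥ ℓ·n/k`, and
`|⋃_{i∈N'}(A_i ∩ W)| < ℓ`. -/
def NaturalPJRplusWitness (N C : Finset ℕ) (A : ℕ → Finset ℕ) (k : ℕ) (W : Finset ℕ)
    (N' : Finset ℕ) : Prop :=
  ∃ ℓ : ℕ, 1 ≤ ℓ ∧ ℓ ≤ k ∧ ∃ c ∈ C, c ∉ W ∧ N' ⊆ N ∧ (∀ i ∈ N', c ∈ A i) ∧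
    ℓ * N.card ≤ N'.card * k ∧ (N'.biUnion fun i => A i ∩ W).card < ℓ

/-- PJR+ with its natural witness function satisfies merge-proofness: a natural
PJR+ witness `N'` remains a witness when voters of `N'` extend their ballots
within the union `⋃_{j∈N'} A_j`, while all other ballots stay unchanged. -/
theorem pjrplus_natural_witness_mergeProof
    (N C : Finset ℕ) (A A' : ℕ → Finset ℕ) (k : ℕ) (W : Finset ℕ) (N' : Finset ℕ)
    (hw : NaturalPJRplusWitness N C A k W N')
    (hout : ∀ i, i ∉ N' → A' i = A i)
    (hin : ∀ i ∈ N', A i ⊆ A' i ∧ A' i ⊆ N'.biUnion A) :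
    NaturalPJRplusWitness N C A' k W N' := by
  obtain ⟨ℓ, h1, h2, c, hc, hcW, hNN, hca, hcard, hlt⟩ := hw
  refine ⟨ℓ, h1, h2, c, hc, hcW, hNN, fun i hi => (hin i hi).1 (hca i hi), hcard, ?_⟩
  calc (N'.biUnion fun i => A' i ∩ W).card
      ≤ (N'.biUnion fun i => A i ∩ W).card := by
        apply Finset.card_le_card
        intro x hx
        simp only [Finset.mem_biUnion, Finset.mem_inter] at hx ⊢
        obtain ⟨i, hi, hxA, hxW⟩ := hx
        have := (hin i hi).2 hxA
        simp only [Finset.mem_biUnion] at this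
        obtain ⟨j, hj, hxj⟩ := this
        exact ⟨j, hj, hxj, hxW⟩
    _ < ℓ := hlt
end

section
/- Let f be a lower quota extension with witness function w such that (f, w) is cohesiveness-based and satisfies merge-proofness. Then PJR+ refines f: every committee satisfying PJR+ is selected by f on every instance. -/
open Finset


/-- Let `f` be a lower quota extension with a witness function `w` such that
`(f, w)` is cohesiveness-based and satisfies merge-proofness.
Then PJR+ refines `f`: every committee satisfying PJR+ is selected by `f`. -/
theorem pjrplus_refines_f
    (f : Finset ℕ → (ℕ → Finset ℕ) → Finset ℕ → ℕ → Finset ℕ → Prop)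
    (w : Finset ℕ → (ℕ → Finset ℕ) → Finset ℕ → ℕ → Finset ℕ → Finset ℕ → Prop)
    (hval : ∀ N A C k W N', w N A C k W N' → N'.Nonempty ∧ N' ⊆ N)
    (hiff : ∀ N A C k W, f N A C k W ↔ ∀ N', ¬ w N A C k W N')
    (hemb : ∀ N A C k W N' N₂ A₂ C₂ W₂ N₂',
      w N A C k W N' → N₂.card = N.card → N₂' ⊆ N₂ →
      LocallyEmbeds N' A W N₂' A₂ W₂ → w N₂ A₂ C₂ k W₂ N₂')
    (hcoh : ∀ N A C k W N', w N A C k W N' → ∃ c, c ∉ W ∧ ∀ i ∈ N', c ∈ A i)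
    (hLQE : ∀ N A C k P W, IsPartyList N C A P → N.Nonempty → W ⊆ C → W.card = k →
      (f N A C k W ↔ LowerQuota N A k P W))
    (hmp : ∀ N A C k W N' A', w N A C k W N' →
      (∀ i, i ∉ N' → A' i = A i) →
      (∀ i ∈ N', A i ⊆ A' i ∧ A' i ⊆ N'.biUnion A) →
      w N A' C k W N') :
    ∀ N A C k W, N.Nonempty → (∀ i ∈ N, A i ⊆ C) → W ⊆ C → W.card = k →
      PJRplus N A k W → f N A C k W := by

  intro N A C k W hN hA hWC hWk hPJR
  rw [hiff]
  intro N' hw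
  obtain ⟨hN'ne, hN'sub⟩ := hval N A C k W N' hw
  obtain ⟨c, hcW, hcA⟩ := hcoh N A C k W N' hw
  have hn : N.card ≠ 0 := Finset.card_ne_zero.mpr hN
  set U : Finset ℕ := N'.biUnion A with hU
  have hcU : c ∈ U := by
    obtain ⟨i, hi⟩ := hN'ne
    exact mem_biUnion.mpr ⟨i, hi, hcA i hi⟩
  have hUne : U.Nonempty := ⟨c, hcU⟩
  -- merged profile
  set A' : ℕ → Finset ℕ := fun i => if i ∈ N' then U else A i with hA'def
  have hw' : w N A' C k W N' := by
    apply hmp N A C k W N' A' hw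
    · intro i hi; simp [hA'def, hi]
    · intro i hi
      refine ⟨?_, ?_⟩
      · simp only [hA'def, if_pos hi]; exact subset_biUnion_of_mem A hi
      · simp [hA'def, if_pos hi, hU]
  have hUA' : N'.biUnion A' = U := by
    apply Finset.ext; intro x
    simp only [mem_biUnion]
    constructor
    · rintro ⟨i, hi, hx⟩
      simp only [hA'def, if_pos hi] at hx
      exact hx
    · intro hx
      obtain ⟨i, hi⟩ := hN'ne
      exact ⟨i, hi, by simp only [hA'def, if_pos hi]; exact hx⟩
  -- the PJR+ bound for party U
  have hbiU : (N'.biUnion fun i => A i ∩ W) = U ∩ W := by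
    apply Finset.ext; intro x
    simp only [mem_biUnion, mem_inter, hU]
    tauto
  have hkey : k * N'.card / N.card ≤ (W ∩ U).card := by
    by_contra hlt
    push_neg at hlt
    set g := (W ∩ U).card with hg
    have h1 : g + 1 ≤ k * N'.card / N.card := hlt
    have hm_le_k : k * N'.card / N.card ≤ k := by
      calc k * N'.card / N.card ≤ k * N.card / N.card :=
            Nat.div_le_div_right (Nat.mul_le_mul_left k (card_le_card hN'sub))
        _ = k := Nat.mul_div_cancel _ (Nat.pos_of_ne_zero hn)
    have hmul : (g + 1) * N.card ≤ N'.card * k := by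
      calc (g + 1) * N.card ≤ (k * N'.card / N.card) * N.card :=
            Nat.mul_le_mul_right _ h1
        _ ≤ k * N'.card := Nat.div_mul_le_self _ _
        _ = N'.card * k := Nat.mul_comm _ _
    have := hPJR (g + 1) (by omega) (by omega) c hcW N' hN'sub hcA hmul
    rw [hbiU, inter_comm] at this
    omega
  -- case split on whether W ⊆ U
  by_cases hWU : W ⊆ U
  · -- everyone supports party U
    set A₂ : ℕ → Finset ℕ := fun _ => U with hA₂def
    have hPL : IsPartyList N U A₂ {U} := by
      refine ⟨?_, ?_, ?_, ?_⟩
      · intro p hp; rw [mem_singleton] at hp; subst hp; exact hUne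
      · intro p hp q hq hpq
        rw [mem_singleton] at hp hq; subst hp; subst hq; exact absurd rfl hpq
      · simp
      · intro i _; simp [hA₂def]
    have hf2 : f N A₂ U k W := by
      rw [hLQE N A₂ U k {U} W hPL hN hWU hWk]
      intro p hp
      rw [mem_singleton] at hp; rw [hp]
      have hfil : (N.filter fun i => A₂ i = U) = N := by
        apply filter_true_of_mem; intro i _; rfl
      rw [hfil, Nat.mul_div_cancel _ (Nat.pos_of_ne_zero hn)]
      have : W ∩ U = W := inter_eq_left.mpr hWU
      rw [this, hWk]
      exact min_le_left _ _
    have hemb2 : LocallyEmbeds N' A' W N' A₂ W := by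
      refine ⟨id, id, ?_, ?_, ?_, ?_, ?_⟩
      · exact Set.bijOn_id _
      · exact Set.injOn_id _
      · intro x hx
        simp only [Finset.coe_union, Set.mem_union, Finset.mem_coe] at hx ⊢
        have hA₂U : N'.biUnion A₂ = U := by
          apply Finset.ext; intro y
          simp only [mem_biUnion, hA₂def]
          exact ⟨fun ⟨i, _, hy⟩ => hy, fun hy => hN'ne.elim fun i hi => ⟨i, hi, hy⟩⟩
        rw [hUA'] at hx
        rw [hA₂U]
        exact hx
      · exact image_id
      · intro j hj c' _
        simp only [hA'def, hA₂def, if_pos hj, id]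
    have hw2 := hemb N A' C k W N' N A₂ U W N' hw' rfl hN'sub hemb2
    exact absurd hf2 ((hiff N A₂ U k W).not.mpr (by push_neg; exact ⟨N', hw2⟩))
  · -- two parties: U and Q = W \ U
    set Q : Finset ℕ := W \ U with hQdef
    have hQne : Q.Nonempty := by
      rw [hQdef, sdiff_nonempty]; exact hWU
    have hQU : Q ≠ U := by
      intro h
      have : c ∈ Q := h ▸ hcU
      rw [hQdef, mem_sdiff] at this
      exact hcW this.1
    set A₂ : ℕ → Finset ℕ := fun i => if i ∈ N' then U else Q with hA₂def
    set C₂ : Finset ℕ := U ∪ Q with hC₂def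
    have hPL : IsPartyList N C₂ A₂ {U, Q} := by
      refine ⟨?_, ?_, ?_, ?_⟩
      · intro p hp
        rw [mem_insert, mem_singleton] at hp
        rcases hp with h | h <;> subst h
        · exact hUne
        · exact hQne
      · intro p hp q hq hpq
        rw [mem_insert, mem_singleton] at hp hq
        have hd : Disjoint U Q := by
          rw [hQdef]; exact disjoint_sdiff
        rcases hp with h | h <;> rcases hq with h' | h' <;> subst h <;> subst h'
        · exact absurd rfl hpq
        · exact hd
        · exact hd.symm
        · exact absurd rfl hpq
      · simp [hC₂def]
      · intro i _
        simp only [hA₂def]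
        by_cases hi : i ∈ N' <;> simp [hi]
    have hWC₂ : W ⊆ C₂ := by
      intro x hx
      rw [hC₂def, mem_union]
      by_cases hxU : x ∈ U
      · exact Or.inl hxU
      · exact Or.inr (by rw [hQdef, mem_sdiff]; exact ⟨hx, hxU⟩)
    have hf2 : f N A₂ C₂ k W := by
      rw [hLQE N A₂ C₂ k {U, Q} W hPL hN hWC₂ hWk]
      intro p hp
      rw [mem_insert, mem_singleton] at hp
      rcases hp with h | h <;> subst h
      · -- party U: supporters are exactly N'
        have hfil : (N.filter fun i => A₂ i = U) = N' := by
          apply Finset.ext; intro i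
          rw [mem_filter]
          constructor
          · rintro ⟨hiN, hAi⟩
            by_contra hiN'
            simp only [hA₂def, if_neg hiN'] at hAi
            exact hQU hAi
          · intro hi
            exact ⟨hN'sub hi, by simp [hA₂def, hi]⟩
        rw [hfil]
        exact le_trans (min_le_left _ _) hkey
      · -- party Q ⊆ W
        have : W ∩ Q = Q := inter_eq_right.mpr (by rw [hQdef]; exact sdiff_subset)
        rw [this]
        exact min_le_right _ _
    have hemb2 : LocallyEmbeds N' A' W N' A₂ W := by
      refine ⟨id, id, ?_, ?_, ?_, ?_, ?_⟩
      · exact Set.bijOn_id _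
      · exact Set.injOn_id _
      · intro x hx
        simp only [Finset.coe_union, Set.mem_union, Finset.mem_coe] at hx ⊢
        have hA₂U : N'.biUnion A₂ = U := by
          apply Finset.ext; intro y
          simp only [mem_biUnion]
          constructor
          · rintro ⟨i, hi, hy⟩
            simp only [hA₂def, if_pos hi] at hy
            exact hy
          · intro hy
            obtain ⟨i, hi⟩ := hN'ne
            exact ⟨i, hi, by simp only [hA₂def, if_pos hi]; exact hy⟩
        rw [hUA'] at hx
        rw [hA₂U]
        exact hx
      · exact image_id
      · intro j hj c' _
        simp only [hA'def, hA₂def, if_pos hj, id]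
    have hw2 := hemb N A' C k W N' N A₂ C₂ W N' hw' rfl hN'sub hemb2
    exact absurd hf2 ((hiff N A₂ C₂ k W).not.mpr (by push_neg; exact ⟨N', hw2⟩))
end

section
/- A committee W is sub-core-stable if and only if for every subset C' ⊆ C \ W, every ℓ ∈ [k], and every group N' of voters each approving at least one candidate of C' with |N'| ≥ ℓ·n/k, it holds that |⋃_{i∈N'}(A_i ∩ W)| > ℓ − |C'|. -/
open Finset

/-- `W` is sub-core-stable: there are no `ℓ ∈ [k]`, group `N' ⊆ N` with
`|N'| ≥ ℓ·n/k`, and set `C' ⊆ C` with `|C'| ≤ ℓ` such that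
`A_i ∩ C'` strictly contains `A_i ∩ W` for all `i ∈ N'`. -/
def SubCoreStable (N C : Finset ℕ) (A : ℕ → Finset ℕ) (k : ℕ) (W : Finset ℕ) : Prop :=
  ¬ ∃ ℓ : ℕ, 1 ≤ ℓ ∧ ℓ ≤ k ∧ ∃ N' ⊆ N, ∃ C' ⊆ C,
      ℓ * N.card ≤ N'.card * k ∧ C'.card ≤ ℓ ∧ ∀ i ∈ N', A i ∩ W ⊂ A i ∩ C'

/-- A committee `W` is sub-core-stable iff for every `C' ⊆ C \\ W`, every
`ℓ ∈ [k]`, and every group `N'` of voters each approving at least one candidate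
of `C'` with `|N'| ≥ ℓ·n/k`, we have `|⋃_{i∈N'}(A_i ∩ W)| > ℓ − |C'|`. -/
theorem subCoreStable_iff
    (N C : Finset ℕ) (A : ℕ → Finset ℕ) (k : ℕ) (W : Finset ℕ)
    (hN : N.Nonempty) (hk : 0 < k) (hA : ∀ i ∈ N, A i ⊆ C)
    (hW : W ⊆ C) (hWk : W.card = k) :
    SubCoreStable N C A k W ↔
      ∀ C' ⊆ C \ W, ∀ ℓ : ℕ, 1 ≤ ℓ → ℓ ≤ k → ∀ N' ⊆ N,
        (∀ i ∈ N', (A i ∩ C').Nonempty) → ℓ * N.card ≤ N'.card * k →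
        ℓ < (N'.biUnion fun i => A i ∩ W).card + C'.card := by
  constructor
  · intro hstable C' hC' ℓ hℓ1 hℓk N' hN' hNE hcard
    by_contra hle
    push_neg at hle
    apply hstable
    set B : Finset ℕ := N'.biUnion fun i => A i ∩ W with hB
    refine ⟨ℓ, hℓ1, hℓk, N', hN', C' ∪ B, ?_, hcard, ?_, ?_⟩
    · intro x hx
      rcases Finset.mem_union.mp hx with h | h
      · exact (Finset.mem_sdiff.mp (hC' h)).1
      · obtain ⟨i, hi, hxi⟩ := Finset.mem_biUnion.mp h
        exact hW (Finset.mem_inter.mp hxi).2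
    · calc (C' ∪ B).card ≤ C'.card + B.card := Finset.card_union_le _ _
        _ ≤ ℓ := by omega
    · intro i hi
      have hsub : A i ∩ W ⊆ A i ∩ (C' ∪ B) := by
        intro x hx
        rcases Finset.mem_inter.mp hx with ⟨hxa, hxw⟩
        exact Finset.mem_inter.mpr ⟨hxa, Finset.mem_union_right _
          (Finset.mem_biUnion.mpr ⟨i, hi, Finset.mem_inter.mpr ⟨hxa, hxw⟩⟩)⟩
      obtain ⟨x, hx⟩ := hNE i hi
      rcases Finset.mem_inter.mp hx with ⟨hxa, hxc⟩
      refine Finset.ssubset_iff_of_subset hsub |>.mpr ⟨x, ?_, ?_⟩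
      · exact Finset.mem_inter.mpr ⟨hxa, Finset.mem_union_left _ hxc⟩
      · intro hcon
        exact (Finset.mem_sdiff.mp (hC' hxc)).2 (Finset.mem_inter.mp hcon).2
  · rintro h ⟨ℓ, hℓ1, hℓk, N', hN', C', hC', hcard, hCℓ, hblock⟩
    have hsub : (C' \ W) ⊆ C \ W := by
      intro x hx
      rcases Finset.mem_sdiff.mp hx with ⟨h1, h2⟩
      exact Finset.mem_sdiff.mpr ⟨hC' h1, h2⟩
    have hne : ∀ i ∈ N', (A i ∩ (C' \ W)).Nonempty := by
      intro i hi
      obtain ⟨hss, hns⟩ := hblock i hi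
      obtain ⟨x, hx1, hx2⟩ := Finset.exists_of_ssubset (hblock i hi)
      rcases Finset.mem_inter.mp hx1 with ⟨hxa, hxc⟩
      have hxw : x ∉ W := fun hw => hx2 (Finset.mem_inter.mpr ⟨hxa, hw⟩)
      exact ⟨x, Finset.mem_inter.mpr ⟨hxa, Finset.mem_sdiff.mpr ⟨hxc, hxw⟩⟩⟩
    have key := h (C' \ W) hsub ℓ hℓ1 hℓk N' hN' hne hcard
    set B : Finset ℕ := N'.biUnion fun i => A i ∩ W with hB
    have hBsub : B ⊆ C' ∩ W := by
      intro x hx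
      obtain ⟨i, hi, hxi⟩ := Finset.mem_biUnion.mp hx
      rcases Finset.mem_inter.mp ((hblock i hi).1 hxi) with ⟨_, hxc⟩
      exact Finset.mem_inter.mpr ⟨hxc, (Finset.mem_inter.mp hxi).2⟩
    have h1 : B.card ≤ (C' ∩ W).card := Finset.card_le_card hBsub
    have h2 : (C' \ W).card + (C' ∩ W).card = C'.card := by
      rw [Finset.card_sdiff_add_card_inter]
    omega
end

section
/- Every sub-core-stable committee satisfies FPJR: for every set T ⊆ C and β ∈ [k], if N' ⊆ N satisfies |N'| ≥ |T|·n/k and |A_i ∩ T| ≥ β for all i ∈ N', then |⋃_{i∈N'}(A_i ∩ W)| ≥ β. -/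
open Finset

/-- Every sub-core-stable committee satisfies FPJR: for every `T ⊆ C`, `β ∈ [k]`,
and every (β,T)-cohesive group `N'` (i.e. `|N'| ≥ |T|·n/k` and `|A_i ∩ T| ≥ β`
for all `i ∈ N'`), we have `|⋃_{i∈N'}(A_i ∩ W)| ≥ β`. -/
theorem subCore_implies_fpjr
    (N C : Finset ℕ) (A : ℕ → Finset ℕ) (k : ℕ) (W : Finset ℕ)
    (hN : N.Nonempty) (hk : 0 < k) (hA : ∀ i ∈ N, A i ⊆ C)
    (hW : W ⊆ C) (hWk : W.card = k)
    (h : SubCoreStable N C A k W) :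
    ∀ T ⊆ C, ∀ β : ℕ, 1 ≤ β → β ≤ k → ∀ N' ⊆ N, N'.Nonempty →
      T.card * N.card ≤ N'.card * k → (∀ i ∈ N', β ≤ (A i ∩ T).card) →
      β ≤ (N'.biUnion fun i => A i ∩ W).card := by
  intro T hT β hβ1 hβk N' hN' hN'ne hcard hcoh
  by_contra hcon
  push_neg at hcon
  set U : Finset ℕ := N'.biUnion fun i => A i ∩ W with hU
  obtain ⟨i0, hi0⟩ := hN'ne
  have hβT : β ≤ T.card := (hcoh i0 hi0).trans (card_le_card (inter_subset_right))
  have hUT : U.card ≤ T.card := le_trans (le_of_lt hcon) hβT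
  -- choose T' ⊆ T \ U with card T.card - U.card
  have hsd : T.card - U.card ≤ (T \ U).card := le_card_sdiff U T
  obtain ⟨T', hT'sub, hT'card⟩ := Finset.exists_subset_card_eq hsd
  have hT'T : T' ⊆ T := hT'sub.trans (sdiff_subset)
  have hdisj : Disjoint U T' := by
    refine disjoint_left.mpr fun x hx hx' => ?_
    exact (mem_sdiff.mp (hT'sub hx')).2 hx
  set C' : Finset ℕ := U ∪ T' with hC'
  have hC'card : C'.card = T.card := by
    rw [hC', card_union_of_disjoint hdisj, hT'card]
    omega
  apply h
  refine ⟨T.card, le_trans hβ1 hβT, ?_, N', hN', C', ?_, ?_, ?_, ?_⟩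
  · -- T.card ≤ k
    have h1 : T.card * N.card ≤ k * N.card := by
      calc T.card * N.card ≤ N'.card * k := hcard
        _ ≤ N.card * k := Nat.mul_le_mul_right k (card_le_card hN')
        _ = k * N.card := Nat.mul_comm _ _
    exact Nat.le_of_mul_le_mul_right h1 (card_pos.mpr hN)
  · -- C' ⊆ C
    intro x hx
    rcases mem_union.mp hx with hx | hx
    · obtain ⟨i, hiN', hxi⟩ := mem_biUnion.mp hx
      exact hA i (hN' hiN') (mem_inter.mp hxi).1
    · exact hT (hT'T hx)
  · exact hcard
  · exact le_of_eq hC'card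
  · intro i hi
    have hsub : A i ∩ W ⊆ A i ∩ C' := by
      intro x hx
      refine mem_inter.mpr ⟨(mem_inter.mp hx).1, mem_union_left _ ?_⟩
      exact mem_biUnion.mpr ⟨i, hi, hx⟩
    -- find an element of A i ∩ T' not in U
    have hne : (A i ∩ T').Nonempty := by
      rw [← card_pos]
      have hsplit : A i ∩ T ⊆ (A i ∩ T') ∪ (T \ T') := by
        intro x hx
        rcases mem_inter.mp hx with ⟨hxa, hxt⟩
        by_cases hx' : x ∈ T'
        · exact mem_union_left _ (mem_inter.mpr ⟨hxa, hx'⟩)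
        · exact mem_union_right _ (mem_sdiff.mpr ⟨hxt, hx'⟩)
      have h1 : β ≤ (A i ∩ T').card + (T \ T').card :=
        le_trans (hcoh i hi) (le_trans (card_le_card hsplit) (card_union_le _ _))
      have h2 : (T \ T').card = T.card - T'.card := card_sdiff_of_subset hT'T
      omega
    obtain ⟨x, hx⟩ := hne
    refine ssubset_iff_of_subset hsub |>.mpr ⟨x, ?_, ?_⟩
    · exact mem_inter.mpr ⟨(mem_inter.mp hx).1, mem_union_right _ (mem_inter.mp hx).2⟩
    · intro hxW
      exact (mem_sdiff.mp (hT'sub (mem_inter.mp hx).2)).2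
        (mem_biUnion.mpr ⟨i, hi, hxW⟩)
end

section
/- Every committee that is g_ε-representative for some ε > 0 (near perfect representation, NPR) satisfies EJR+, and the inclusion is strict: with n = 4, k = 4, ballots A_i = {c₁,…,c_{6−i}} for i ∈ {1,2,3,4} arranged so that voter i approves c₁ and the candidates c₂,…,c_{6−i} (voter 1 approves {c₁,…,c₅}, voter 2 approves {c₁,…,c₄}, voter 3 approves {c₁,c₂,c₃}, voter 4 approves {c₁,c₂}), the committee {c₂,c₃,c₄,c₅} satisfies EJR+ but not NPR. -/
open Finset


/-- `W` is `g`-representative: for every `ℓ ∈ [k]`, unelected candidate `c ∉ W`,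
and `ℓ`-large group `N'` of supporters of `c`, the average number of approved
committee members over `N'` is at least `g ℓ`. -/
def GRepresentative (N : Finset ℕ) (A : ℕ → Finset ℕ) (k : ℕ) (W : Finset ℕ)
    (g : ℕ → ℝ) : Prop :=
  ∀ ℓ : ℕ, 1 ≤ ℓ → ℓ ≤ k → ∀ c : ℕ, c ∉ W →
    ∀ N' ⊆ N, (∀ i ∈ N', c ∈ A i) → ℓ * N.card ≤ N'.card * k →
    g ℓ * (N'.card : ℝ) ≤ ∑ i ∈ N', ((A i ∩ W).card : ℝ)

/-- Near perfect representation (NPR): `W` is `g_ε`-representative for some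
`ε > 0`, where `g_ε ℓ = ℓ - 1 + ε`. -/
def NPR (N : Finset ℕ) (A : ℕ → Finset ℕ) (k : ℕ) (W : Finset ℕ) : Prop :=
  ∃ ε : ℝ, 0 < ε ∧ GRepresentative N A k W (fun ℓ => (ℓ : ℝ) - 1 + ε)

/-- NPR implies EJR+, and the inclusion is strict: in the instance with `n = 4`,
`k = 4`, ballots `A_i = {1, …, 6−i}` for `i ∈ {1,2,3,4}`, the committee
`{2,3,4,5}` satisfies EJR+ but not NPR. -/
theorem npr_implies_ejrplus_strict :
    (∀ (N : Finset ℕ) (A : ℕ → Finset ℕ) (k : ℕ) (W : Finset ℕ),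
      N.Nonempty → NPR N A k W → EJRplus N A k W) ∧
    EJRplus (Finset.Icc 1 4) (fun i => Finset.Icc 1 (6 - i)) 4 (Finset.Icc 2 5) ∧
    ¬ NPR (Finset.Icc 1 4) (fun i => Finset.Icc 1 (6 - i)) 4 (Finset.Icc 2 5) := by
  refine ⟨?_, ?_, ?_⟩
  · rintro N A k W hN ⟨ε, hε, hg⟩ ℓ h1 hk c hc N' hsub hcN hcard
    have hgap := hg ℓ h1 hk c hc N' hsub hcN hcard
    have hN'card : 0 < N'.card := by
      rcases Nat.eq_zero_or_pos N'.card with h | h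
      · exfalso
        rw [h, Nat.zero_mul] at hcard
        have : 0 < ℓ * N.card := Nat.mul_pos h1 (Finset.card_pos.mpr hN)
        omega
      · exact h
    by_contra h
    push_neg at h
    have hsum : ∑ i ∈ N', ((A i ∩ W).card : ℝ) ≤ ((ℓ : ℝ) - 1) * N'.card := by
      calc ∑ i ∈ N', ((A i ∩ W).card : ℝ) ≤ ∑ _i ∈ N', ((ℓ : ℝ) - 1) := by
            apply Finset.sum_le_sum
            intro i hi
            have := h i hi
            have : (A i ∩ W).card + 1 ≤ ℓ := this
            have : ((A i ∩ W).card : ℝ) + 1 ≤ (ℓ : ℝ) := by exact_mod_cast this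
            linarith
        _ = ((ℓ : ℝ) - 1) * N'.card := by rw [Finset.sum_const, nsmul_eq_mul, mul_comm]
    have hpos : (0 : ℝ) < N'.card := by exact_mod_cast hN'card
    simp only at hgap
    nlinarith
  · intro ℓ h1 hk c hc N' hsub hcN hcard
    have hN4 : (Finset.Icc 1 4 : Finset ℕ).card = 4 := by decide
    rw [hN4] at hcard
    have hℓN' : ℓ ≤ N'.card := by omega
    have hne : N'.Nonempty := Finset.card_pos.mp (by omega)
    set m := N'.min' hne with hm
    have hmN' : m ∈ N' := N'.min'_mem hne
    have hmIcc : m ∈ Finset.Icc 1 4 := hsub hmN'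
    have hm1 : 1 ≤ m := (Finset.mem_Icc.mp hmIcc).1
    have hm4 : m ≤ 4 := (Finset.mem_Icc.mp hmIcc).2
    have hsub2 : N' ⊆ Finset.Icc m 4 := by
      intro i hi
      exact Finset.mem_Icc.mpr ⟨N'.min'_le i hi, (Finset.mem_Icc.mp (hsub hi)).2⟩
    have hcard2 : N'.card ≤ 5 - m := by
      have := Finset.card_le_card hsub2
      rwa [Nat.card_Icc] at this
    refine ⟨m, hmN', ?_⟩
    show ℓ ≤ (Finset.Icc 1 (6 - m) ∩ Finset.Icc 2 5).card
    have : 5 - m ≤ (Finset.Icc 1 (6 - m) ∩ Finset.Icc 2 5).card := by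
      interval_cases m <;> decide
    omega
  · rintro ⟨ε, hε, hg⟩
    have h := hg 4 (by norm_num) le_rfl 1 (by decide) (Finset.Icc 1 4)
      (Finset.Subset.refl _) (by decide) (by decide)
    have hsum : ∑ i ∈ Finset.Icc 1 4, ((Finset.Icc 1 (6 - i) ∩ Finset.Icc 2 5).card : ℝ)
        = (10 : ℝ) := by
      have : ∑ i ∈ Finset.Icc 1 4, (Finset.Icc 1 (6 - i) ∩ Finset.Icc 2 5).card = 10 := by
        decide
      exact_mod_cast this
    rw [hsum] at h
    have hc : ((Finset.Icc 1 4 : Finset ℕ).card : ℝ) = 4 := by norm_num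
    rw [hc] at h
    norm_num at h
    linarith
end
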